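/- arXiv:cs/0609141 — 3 statements merged into one kernel-verified Lean document; each statement's English description precedes it below -/
import Mathlib

section
/- Let (V_0,…,V_{n−1}) be an n-gon with n ≥ 4. Suppose that for all i ∈ {2,…,n−2}: (1) V_{i+1} and V_0 lie strictly to one side of [V_{i−1}, V_i]; (2) V_{i−1} and V_0 lie strictly to one side of [V_i, V_{i+1}]; and (3) V_i and V_{i+1} lie strictly to one side of [V_0, V_1]. Then the polygon is quasi-strictly convex, i.e., convex and quasi-strict. Conversely, every quasi-strictly convex n-gon with n ≥ 4 satisfies these 3(n−3) conditions. -/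
/-- Determinant of the 3×3 matrix with rows (1,x_P,y_P), (1,x_Q,y_Q), (1,x_R,y_R). -/
def det3 (P Q R : ℝ × ℝ) : ℝ :=
  Matrix.det !![1, P.1, P.2; 1, Q.1, Q.2; 1, R.1, R.2]

/-- Dot product on ℝ². -/
def dot2 (a b : ℝ × ℝ) : ℝ := a.1 * b.1 + a.2 * b.2

/-- The points of `S` lie strictly to one side of the segment `[P,Q]`:
there is a line through `P` and `Q` (with normal `nv`) such that all of `S`
lies in one of the open half-planes it bounds. -/
def StrictSide (P Q : ℝ × ℝ) (S : Set (ℝ × ℝ)) : Prop :=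
  ∃ nv : ℝ × ℝ, nv ≠ 0 ∧ dot2 nv (Q - P) = 0 ∧ ∀ A ∈ S, 0 < dot2 nv (A - P)

/-- The points of `S` lie (non-strictly) to one side of the segment `[P,Q]`:
there is a line containing `[P,Q]` bounding a closed half-plane containing `S`. -/
def WeakSide (P Q : ℝ × ℝ) (S : Set (ℝ × ℝ)) : Prop :=
  ∃ nv : ℝ × ℝ, nv ≠ 0 ∧ dot2 nv (Q - P) = 0 ∧ ∀ A ∈ S, 0 ≤ dot2 nv (A - P)

/-- The successor index modulo `n`. -/
def nxt {n : ℕ} (i : Fin n) : Fin n :=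
  ⟨(i.val + 1) % n, Nat.mod_lt _ (Nat.zero_lt_of_lt i.isLt)⟩

/-- The polygon `(V 0, …, V (n-1))` is convex: the union of its edges equals
the boundary of the convex hull of its vertex set. -/
def IsConvexPolygon {n : ℕ} (V : Fin n → ℝ × ℝ) : Prop :=
  (⋃ i : Fin n, segment ℝ (V i) (V (nxt i))) = frontier (convexHull ℝ (Set.range V))

/-- Quasi-strict: no two adjacent vertices are collinear with any other vertex. -/
def QuasiStrict {n : ℕ} (V : Fin n → ℝ × ℝ) : Prop :=
  ∀ i j : Fin n, j ≠ i → j ≠ nxt i → ¬ Collinear ℝ ({V i, V (nxt i), V j} : Set (ℝ × ℝ))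

/-- Strict: no three vertices with distinct indices are collinear. -/
def StrictPoly {n : ℕ} (V : Fin n → ℝ × ℝ) : Prop :=
  ∀ i j k : Fin n, i ≠ j → i ≠ k → j ≠ k → ¬ Collinear ℝ ({V i, V j, V k} : Set (ℝ × ℝ))

/-- The vertices other than the endpoints of edge `i`. -/
def OtherVerts {n : ℕ} (V : Fin n → ℝ × ℝ) (i : Fin n) : Set (ℝ × ℝ) :=
  {P | ∃ j : Fin n, j ≠ i ∧ j ≠ nxt i ∧ P = V j}

/-- The polygon is strictly to one side of each of its edges. -/
def StrictlyToOneSide {n : ℕ} (V : Fin n → ℝ × ℝ) : Prop :=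
  ∀ i : Fin n, StrictSide (V i) (V (nxt i)) (OtherVerts V i)

/-- The polygon is (non-strictly) to one side of each of its edges. -/
def ToOneSide {n : ℕ} (V : Fin n → ℝ × ℝ) : Prop :=
  ∀ i : Fin n, WeakSide (V i) (V (nxt i)) (OtherVerts V i)

namespace PinelisAux

def cross (u w : ℝ × ℝ) : ℝ := u.1 * w.2 - u.2 * w.1

def rot (u : ℝ × ℝ) : ℝ × ℝ := (-u.2, u.1)

lemma det3_eq_cross (P Q R : ℝ × ℝ) : det3 P Q R = cross (Q - P) (R - P) := by
  simp [det3, Matrix.det_fin_three, Matrix.vecHead, Matrix.vecTail, cross]; ring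

lemma det3_cyc (P Q R : ℝ × ℝ) : det3 P Q R = det3 Q R P := by
  simp only [det3_eq_cross, cross, Prod.fst_sub, Prod.snd_sub]; ring

lemma det3_cyc' (P Q R : ℝ × ℝ) : det3 P Q R = det3 R P Q := by
  rw [det3_cyc, det3_cyc]

lemma det3_swap23 (P Q R : ℝ × ℝ) : det3 P Q R = -det3 P R Q := by
  simp only [det3_eq_cross, cross, Prod.fst_sub, Prod.snd_sub]; ring

lemma det3_PPQ (P Q : ℝ × ℝ) : det3 P P Q = 0 := by
  simp only [det3_eq_cross, cross, Prod.fst_sub, Prod.snd_sub]; ring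

lemma det3_PQP (P Q : ℝ × ℝ) : det3 P Q P = 0 := by
  simp only [det3_eq_cross, cross, Prod.fst_sub, Prod.snd_sub]; ring

lemma det3_PQQ (P Q : ℝ × ℝ) : det3 P Q Q = 0 := by
  simp only [det3_eq_cross, cross, Prod.fst_sub, Prod.snd_sub]; ring

lemma det3_five (u v p q r x : ℝ × ℝ) :
    det3 p q r * det3 u v x =
      det3 x q r * det3 u v p + det3 p x r * det3 u v q + det3 p q x * det3 u v r := by
  simp only [det3_eq_cross, cross, Prod.fst_sub, Prod.snd_sub]; ring

lemma det3_zero_of_collinear {P Q R : ℝ × ℝ} (h : Collinear ℝ ({P, Q, R} : Set (ℝ × ℝ))) :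
    det3 P Q R = 0 := by
  obtain ⟨p₀, v, hv⟩ := (collinear_iff_exists_forall_eq_smul_vadd _).mp h
  obtain ⟨a, ha⟩ := hv P (by simp)
  obtain ⟨b, hb⟩ := hv Q (by simp)
  obtain ⟨c, hc⟩ := hv R (by simp)
  subst ha hb hc
  simp only [det3_eq_cross, cross, vadd_eq_add, Prod.fst_sub, Prod.snd_sub, Prod.fst_add,
    Prod.snd_add, Prod.smul_fst, Prod.smul_snd, smul_eq_mul]
  ring

lemma dot2_self_pos {u : ℝ × ℝ} (hu : u ≠ 0) : 0 < dot2 u u := by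
  have h : u.1 ≠ 0 ∨ u.2 ≠ 0 := by
    by_contra hc; push_neg at hc
    exact hu (Prod.ext hc.1 hc.2)
  simp only [dot2]
  rcases h with h | h
  · nlinarith [mul_self_nonneg u.2, mul_self_pos.mpr h]
  · nlinarith [mul_self_nonneg u.1, mul_self_pos.mpr h]

lemma pos_factor {a b : ℝ} (h : 0 < a * b) (hb : 0 < b) : 0 < a := by
  rcases mul_pos_iff.mp h with ⟨h1, _⟩ | ⟨_, h2⟩
  · exact h1
  · linarith

lemma sign_trans {a b c : ℝ} (h1 : 0 < a * b) (h2 : 0 < a * c) : 0 < b * c := by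
  rcases mul_pos_iff.mp h1 with ⟨ha, hb⟩ | ⟨ha, hb⟩ <;>
    rcases mul_pos_iff.mp h2 with ⟨ha', hc⟩ | ⟨ha', hc⟩ <;>
    first
      | exact mul_pos hb hc
      | exact mul_pos_of_neg_of_neg hb hc
      | linarith

/-- Lagrange-type: if `nv ⊥ u` then same-side conditions give a positive determinant product. -/
lemma strictSide_det_prod {P Q A B : ℝ × ℝ} (hPQ : P ≠ Q) (h : StrictSide P Q {A, B}) :
    0 < det3 P Q A * det3 P Q B := by
  obtain ⟨nv, hnv0, hperp, hpos⟩ := h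
  have hA := hpos A (by simp)
  have hB := hpos B (by simp)
  set u := Q - P with hu
  have hune : u ≠ 0 := sub_ne_zero.mpr (Ne.symm hPQ)
  have huu : 0 < dot2 u u := dot2_self_pos hune
  -- Lagrange identity : cross u x * cross u nv + dot2 u x * dot2 u nv = dot2 u u * dot2 x nv
  have lag : ∀ x : ℝ × ℝ, cross u x * cross u nv + dot2 u x * dot2 u nv = dot2 u u * dot2 x nv := by
    intro x; simp only [cross, dot2]; ring
  have hperp' : dot2 u nv = 0 := by
    have : dot2 nv u = 0 := hperp
    simp only [dot2] at this ⊢; linarith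
  have mk : ∀ x : ℝ × ℝ, 0 < dot2 nv (x - P) → 0 < cross u (x - P) * cross u nv := by
    intro x hx
    have h1 := lag (x - P)
    have hd : dot2 (x - P) nv = dot2 nv (x - P) := by simp only [dot2]; ring
    rw [hperp', hd] at h1
    nlinarith [mul_pos huu hx]
  have hA' := mk A hA
  have hB' := mk B hB
  rw [det3_eq_cross, det3_eq_cross, ← hu]
  nlinarith [mul_pos hA' hB', sq_nonneg (cross u nv)]

lemma StrictSide.ne_left {P Q A : ℝ × ℝ} {S : Set (ℝ × ℝ)} (h : StrictSide P Q S) (hA : A ∈ S) :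
    A ≠ P := by
  obtain ⟨nv, _, _, hpos⟩ := h
  intro hE
  have := hpos A hA
  rw [hE] at this
  simp [dot2] at this

lemma StrictSide.ne_right {P Q A : ℝ × ℝ} {S : Set (ℝ × ℝ)} (h : StrictSide P Q S) (hA : A ∈ S) :
    A ≠ Q := by
  obtain ⟨nv, _, hperp, hpos⟩ := h
  intro hE
  have := hpos A hA
  rw [hE, hperp] at this
  exact lt_irrefl _ this

lemma strictSide_of {P Q A B : ℝ × ℝ} {ε : ℝ} (hεpm : ε = 1 ∨ ε = -1)
    (hA : 0 < ε * det3 P Q A) (hB : 0 < ε * det3 P Q B) : StrictSide P Q {A, B} := by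
  have hεne : ε ≠ 0 := by rcases hεpm with rfl | rfl <;> norm_num
  have hPQ : Q - P ≠ 0 := by
    intro h0
    rw [det3_eq_cross, h0] at hA
    simp [cross] at hA
  refine ⟨ε • rot (Q - P), ?_, ?_, ?_⟩
  · simp only [ne_eq, smul_eq_zero, hεne, false_or]
    intro h0
    apply hPQ
    have h1 : (rot (Q-P)).1 = 0 := by rw [h0]; rfl
    have h2 : (rot (Q-P)).2 = 0 := by rw [h0]; rfl
    simp only [rot, neg_eq_zero] at h1 h2
    exact Prod.ext h2 h1
  · simp only [dot2, rot, Prod.smul_fst, Prod.smul_snd, smul_eq_mul]; ring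
  · intro X hX
    have key : ∀ C, 0 < ε * det3 P Q C → 0 < dot2 (ε • rot (Q - P)) (C - P) := by
      intro C hC
      rw [det3_eq_cross] at hC
      have he : dot2 (ε • rot (Q - P)) (C - P) = ε * cross (Q - P) (C - P) := by
        simp only [dot2, rot, cross, Prod.smul_fst, Prod.smul_snd, smul_eq_mul]; ring
      rw [he]; exact hC
    rcases hX with rfl | hX
    · exact key _ hA
    · rcases hX with rfl; exact key _ hB

end PinelisAux

section Core
variable {ε : ℝ}

lemma eps_mul_pos (hεpm : ε = 1 ∨ ε = -1) {a b : ℝ} (ha : 0 < ε * a) (hb : 0 < ε * b) :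
    0 < a * b := by rcases hεpm with rfl | rfl <;> nlinarith

lemma eps_transfer {a b : ℝ} (hεpm : ε = 1 ∨ ε = -1) (h : 0 < a * b) (hb : 0 < ε * b) :
    0 < ε * a := by rcases hεpm with rfl | rfl <;> nlinarith

/-- Core chain lemma: local convexity conditions propagate to all triples. -/
lemma chain_convex {n : ℕ} (hn : 4 ≤ n) (W : ℕ → ℝ × ℝ) (hεpm : ε = 1 ∨ ε = -1)
    (hT : ∀ k, k + 4 ≤ n → 0 < ε * det3 (W (k+1)) (W (k+2)) (W (k+3)))
    (hA : ∀ k, k + 3 ≤ n → 0 < ε * det3 (W (k+1)) (W (k+2)) (W 0))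
    (hB : ∀ k, k + 3 ≤ n → 0 < ε * det3 (W 0) (W 1) (W (k+2))) :
    ∀ a b c, a < b → b < c → c ≤ n - 1 → 0 < ε * det3 (W a) (W b) (W c) := by
  have key : ∀ m a b c, a < b → b < c → c ≤ m → c ≤ n - 1 →
      0 < ε * det3 (W a) (W b) (W c) := by
    intro m
    induction m with
    | zero => intro a b c _ _ h3 _; omega
    | succ M ih =>
      intro a b c hab hbc hcM hcn
      rcases Nat.lt_or_ge c (M+1) with hc | hc
      · exact ih a b c hab hbc (by omega) hcn
      have hcM1 : c = M + 1 := by omega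
      -- case c = 2
      rcases Nat.lt_or_ge c 3 with hc2 | hc3
      · have h2 : c = 2 := by omega
        have ha0 : a = 0 := by omega
        have hb1 : b = 1 := by omega
        subst h2 ha0 hb1
        exact hB 0 (by omega)
      obtain ⟨K, rfl⟩ : ∃ K, c = K + 3 := ⟨c - 3, by omega⟩
      have ihQ : ∀ a b c, a < b → b < c → c ≤ K + 2 → 0 < ε * det3 (W a) (W b) (W c) :=
        fun a b c h1 h2 h3 => ih a b c h1 h2 (by omega) (by omega)
      have hTm : 0 < ε * det3 (W (K+1)) (W (K+2)) (W (K+3)) := hT K (by omega)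
      have hA' : 0 < ε * det3 (W (K+2)) (W (K+3)) (W 0) := hA (K+1) (by omega)
      have h0c : 0 < ε * det3 (W 0) (W (K+2)) (W (K+3)) := by
        rwa [PinelisAux.det3_cyc'] at hA'
      have hB' : 0 < ε * det3 (W 0) (W 1) (W (K+3)) := hB (K+1) (by omega)
      -- downward chain
      have hS : ∀ r b, b + r = K + 1 →
          0 < ε * det3 (W 0) (W (b+1)) (W (K+3)) ∧
          0 < ε * det3 (W b) (W (b+1)) (W (K+3)) := by
        intro r
        induction r with
        | zero =>
          intro b hb
          have hbK : b = K + 1 := by omega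
          subst hbK
          exact ⟨h0c, hTm⟩
        | succ r ihr =>
          intro b hb
          have hprev := ihr (b+1) (by omega)
          rcases Nat.eq_zero_or_pos b with rfl | hbpos
          · exact ⟨hB', hB'⟩
          obtain ⟨s, rfl⟩ : ∃ s, b = s + 1 := ⟨b - 1, by omega⟩
          -- hprev : ⟨0 < εD 0 (s+3) X, 0 < εD (s+2) (s+3) X⟩
          have hsK : s + r + 2 = K + 1 := by omega
          have ha : 0 < ε * det3 (W 0) (W (s+2)) (W (K+3)) := by
            have hid := PinelisAux.det3_five (W 0) (W 1) (W 0) (W (s+2)) (W (s+3)) (W (K+3))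
            rw [PinelisAux.det3_PQP, PinelisAux.det3_swap23 (W 0) (W (K+3)) (W (s+3))] at hid
            have q1 : 0 < det3 (W 0) (W (s+2)) (W (s+3)) * det3 (W 0) (W 1) (W (K+3)) :=
              eps_mul_pos hεpm (ihQ 0 (s+2) (s+3) (by omega) (by omega) (by omega)) hB'
            have q2 : 0 < det3 (W 0) (W (s+3)) (W (K+3)) * det3 (W 0) (W 1) (W (s+2)) :=
              eps_mul_pos hεpm hprev.1 (ihQ 0 1 (s+2) (by omega) (by omega) (by omega))
            have q3 : 0 < det3 (W 0) (W (s+2)) (W (K+3)) * det3 (W 0) (W 1) (W (s+3)) := by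
              nlinarith [hid, q1, q2]
            exact eps_transfer hεpm q3 (ihQ 0 1 (s+3) (by omega) (by omega) (by omega))
          refine ⟨ha, ?_⟩
          have hid := PinelisAux.det3_five (W 0) (W (s+2)) (W (s+1)) (W (s+2)) (W (s+3)) (W (K+3))
          rw [PinelisAux.det3_PQQ,
            PinelisAux.det3_cyc (W (K+3)) (W (s+2)) (W (s+3)),
            PinelisAux.det3_swap23 (W 0) (W (s+2)) (W (s+1))] at hid
          have q1 : 0 < det3 (W (s+1)) (W (s+2)) (W (s+3)) * det3 (W 0) (W (s+2)) (W (K+3)) :=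
            eps_mul_pos hεpm (ihQ (s+1) (s+2) (s+3) (by omega) (by omega) (by omega)) ha
          have q2 : 0 < det3 (W (s+2)) (W (s+3)) (W (K+3)) * det3 (W 0) (W (s+1)) (W (s+2)) :=
            eps_mul_pos hεpm hprev.2 (ihQ 0 (s+1) (s+2) (by omega) (by omega) (by omega))
          have q3 : 0 < det3 (W (s+1)) (W (s+2)) (W (K+3)) * det3 (W 0) (W (s+2)) (W (s+3)) := by
            nlinarith [hid, q1, q2]
          exact eps_transfer hεpm q3 (ihQ 0 (s+2) (s+3) (by omega) (by omega) (by omega))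
      have hSS : ∀ t, t ≤ K + 1 →
          0 < ε * det3 (W 0) (W (t+1)) (W (K+3)) ∧
          0 < ε * det3 (W t) (W (t+1)) (W (K+3)) :=
        fun t ht => hS (K + 1 - t) t (by omega)
      -- final assembly, c = K+3
      have hbK2 : b ≤ K + 2 := by omega
      rcases Nat.eq_or_lt_of_le (Nat.succ_le_of_lt hab) with hba | hba
      · -- b = a + 1
        obtain rfl : b = a + 1 := hba.symm
        rcases Nat.eq_zero_or_pos a with rfl | hapos
        · exact (hSS 0 (by omega)).2
        · exact (hSS a (by omega)).2
      · -- b ≥ a + 2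
        rcases Nat.eq_zero_or_pos a with rfl | hapos
        · obtain ⟨t, rfl⟩ : ∃ t, b = t + 1 := ⟨b - 1, by omega⟩
          exact (hSS t (by omega)).1
        obtain ⟨t, rfl⟩ : ∃ t, b = t + 1 := ⟨b - 1, by omega⟩
        have hid := PinelisAux.det3_five (W t) (W (t+1)) (W 0) (W a) (W (t+1)) (W (K+3))
        rw [PinelisAux.det3_PQQ,
          PinelisAux.det3_cyc (W (K+3)) (W a) (W (t+1)),
          PinelisAux.det3_cyc' (W t) (W (t+1)) (W 0),
          PinelisAux.det3_cyc' (W t) (W (t+1)) (W a),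
          PinelisAux.det3_swap23 (W 0) (W (K+3)) (W (t+1))] at hid
        have q1 : 0 < det3 (W 0) (W a) (W (t+1)) * det3 (W t) (W (t+1)) (W (K+3)) :=
          eps_mul_pos hεpm (ihQ 0 a (t+1) (by omega) (by omega) (by omega))
            (hSS t (by omega)).2
        have q2 : 0 < det3 (W 0) (W (t+1)) (W (K+3)) * det3 (W a) (W t) (W (t+1)) :=
          eps_mul_pos hεpm (hSS t (by omega)).1
            (ihQ a t (t+1) (by omega) (by omega) (by omega))
        have q3 : 0 < det3 (W a) (W (t+1)) (W (K+3)) * det3 (W 0) (W t) (W (t+1)) := by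
          nlinarith [hid, q1, q2]
        exact eps_transfer hεpm q3 (ihQ 0 t (t+1) (by omega) (by omega) (by omega))
  exact fun a b c h1 h2 h3 => key (n-1) a b c h1 h2 h3 h3

end Core

namespace PinelisAux3
open PinelisAux

variable {n : ℕ} {V : Fin n → ℝ × ℝ} {ε : ℝ}

lemma fin_ne {a b : Fin n} (h : a.val ≠ b.val) : a ≠ b := fun e => h (congrArg Fin.val e)

def CE (V : Fin n → ℝ × ℝ) (ε : ℝ) : Prop :=
  ∀ i j : Fin n, j ≠ i → j ≠ nxt i → 0 < ε * det3 (V i) (V (nxt i)) (V j)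

lemma CE_quasiStrict (hεpm : ε = 1 ∨ ε = -1) (hCE : CE V ε) : QuasiStrict V := by
  intro i j hji hjn hcol
  have h := hCE i j hji hjn
  rw [det3_zero_of_collinear hcol] at h
  simp at h

lemma CE_rhs (hn : 4 ≤ n) (hεpm : ε = 1 ∨ ε = -1) (hCE : CE V ε) :
    ∀ i : Fin n, 2 ≤ i.val → i.val ≤ n - 2 →
        StrictSide (V ⟨i.val - 1, lt_of_le_of_lt (Nat.sub_le _ _) i.isLt⟩) (V i)
          {V (nxt i), V ⟨0, lt_of_lt_of_le (by norm_num : 0 < 4) hn⟩} ∧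
        StrictSide (V i) (V (nxt i))
          {V ⟨i.val - 1, lt_of_le_of_lt (Nat.sub_le _ _) i.isLt⟩, V ⟨0, lt_of_lt_of_le (by norm_num : 0 < 4) hn⟩} ∧
        StrictSide (V ⟨0, lt_of_lt_of_le (by norm_num : 0 < 4) hn⟩) (V ⟨1, lt_of_lt_of_le (by norm_num : 1 < 4) hn⟩) {V i, V (nxt i)} := by
  intro i h2 hn2
  have hilt := i.isLt
  have hnvi : (nxt i).val = i.val + 1 := Nat.mod_eq_of_lt (by omega)
  set i' : Fin n := ⟨i.val - 1, lt_of_le_of_lt (Nat.sub_le _ _) i.isLt⟩ with hi'def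
  have hnvi' : (nxt i').val = i.val := by
    show (i.val - 1 + 1) % n = i.val
    rw [show i.val - 1 + 1 = i.val by omega]
    exact Nat.mod_eq_of_lt (by omega)
  have hni' : nxt i' = i := Fin.ext hnvi'
  set z : Fin n := ⟨0, by omega⟩ with hzdef
  have hnz : nxt z = ⟨1, by omega⟩ := Fin.ext (by show (0+1) % n = 1; exact Nat.mod_eq_of_lt (by omega))
  refine ⟨?_, ?_, ?_⟩
  · apply strictSide_of hεpm
    · rw [show V i = V (nxt i') from congrArg V hni'.symm]
      exact hCE i' (nxt i)
        (fin_ne (by rw [hnvi]; show i.val + 1 ≠ i.val - 1; omega))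
        (fin_ne (by rw [hnvi, hnvi']; omega))
    · rw [show V i = V (nxt i') from congrArg V hni'.symm]
      exact hCE i' z
        (fin_ne (by show (0:ℕ) ≠ i.val - 1; omega))
        (fin_ne (by rw [hnvi']; show (0:ℕ) ≠ i.val; omega))
  · apply strictSide_of hεpm
    · exact hCE i i'
        (fin_ne (by show i.val - 1 ≠ i.val; omega))
        (fin_ne (by rw [hnvi]; show i.val - 1 ≠ i.val + 1; omega))
    · exact hCE i z
        (fin_ne (by show (0:ℕ) ≠ i.val; omega))
        (fin_ne (by rw [hnvi]; show (0:ℕ) ≠ i.val + 1; omega))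
  · apply strictSide_of hεpm
    · rw [show V (⟨1, by omega⟩ : Fin n) = V (nxt z) from congrArg V hnz.symm]
      exact hCE z i
        (fin_ne (by show i.val ≠ 0; omega))
        (fin_ne (by rw [hnz]; show i.val ≠ 1; omega))
    · rw [show V (⟨1, by omega⟩ : Fin n) = V (nxt z) from congrArg V hnz.symm]
      exact hCE z (nxt i)
        (fin_ne (by rw [hnvi]; show i.val + 1 ≠ 0; omega))
        (fin_ne (by rw [hnvi, hnz]; show i.val + 1 ≠ 1; omega))

end PinelisAux3

namespace PinelisAux2
open PinelisAux

variable {n : ℕ} (V : Fin n → ℝ × ℝ)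

lemma rhs_to_CE (hn : 4 ≤ n)
    (hR : ∀ i : Fin n, 2 ≤ i.val → i.val ≤ n - 2 →
        StrictSide (V ⟨i.val - 1, lt_of_le_of_lt (Nat.sub_le _ _) i.isLt⟩) (V i)
          {V (nxt i), V ⟨0, lt_of_lt_of_le (by norm_num : 0 < 4) hn⟩} ∧
        StrictSide (V i) (V (nxt i))
          {V ⟨i.val - 1, lt_of_le_of_lt (Nat.sub_le _ _) i.isLt⟩, V ⟨0, lt_of_lt_of_le (by norm_num : 0 < 4) hn⟩} ∧
        StrictSide (V ⟨0, lt_of_lt_of_le (by norm_num : 0 < 4) hn⟩) (V ⟨1, lt_of_lt_of_le (by norm_num : 1 < 4) hn⟩) {V i, V (nxt i)}) :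
    ∃ ε : ℝ, (ε = 1 ∨ ε = -1) ∧
      ∀ i j : Fin n, j ≠ i → j ≠ nxt i → 0 < ε * det3 (V i) (V (nxt i)) (V j) := by
  have hn0 : 0 < n := by omega
  set W : ℕ → ℝ × ℝ := fun k => V ⟨k % n, Nat.mod_lt _ hn0⟩ with hWdef
  have hW : ∀ (k : ℕ) (h : k < n), W k = V ⟨k, h⟩ :=
    fun k h => congrArg V (Fin.ext (Nat.mod_eq_of_lt h))
  have hWnxt : ∀ i : Fin n, W (i.val + 1) = V (nxt i) :=
    fun i => congrArg V (Fin.ext rfl)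
  -- extract the three families of conditions in W-form
  have c1 : ∀ k, k + 4 ≤ n → StrictSide (W (k+1)) (W (k+2)) {W (k+3), W 0} := by
    intro k hk
    have hk4 : k + 2 < n := by omega
    have h3 := (hR ⟨k+2, hk4⟩ (by show 2 ≤ k+2; omega) (by show k+2 ≤ n-2; omega)).1
    rw [hW (k+1) (by omega), hW (k+2) (by omega), hW 0 (by omega),
      show W (k+3) = V (nxt (⟨k+2, hk4⟩ : Fin n)) from congrArg V (Fin.ext rfl)]
    exact h3
  have c2 : ∀ k, k + 4 ≤ n → StrictSide (W (k+2)) (W (k+3)) {W (k+1), W 0} := by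
    intro k hk
    have hk4 : k + 2 < n := by omega
    have h3 := (hR ⟨k+2, hk4⟩ (by show 2 ≤ k+2; omega) (by show k+2 ≤ n-2; omega)).2.1
    rw [hW (k+1) (by omega), hW (k+2) (by omega), hW 0 (by omega),
      show W (k+3) = V (nxt (⟨k+2, hk4⟩ : Fin n)) from congrArg V (Fin.ext rfl)]
    exact h3
  have c3 : ∀ k, k + 4 ≤ n → StrictSide (W 0) (W 1) {W (k+2), W (k+3)} := by
    intro k hk
    have hk4 : k + 2 < n := by omega
    have h3 := (hR ⟨k+2, hk4⟩ (by show 2 ≤ k+2; omega) (by show k+2 ≤ n-2; omega)).2.2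
    rw [hW 0 (by omega), hW 1 (by omega), hW (k+2) (by omega),
      show W (k+3) = V (nxt (⟨k+2, hk4⟩ : Fin n)) from congrArg V (Fin.ext rfl)]
    exact h3
  -- adjacent vertices distinct
  have hne1 : ∀ k, k + 4 ≤ n → W (k+1) ≠ W (k+2) :=
    fun k hk => PinelisAux.StrictSide.ne_left (c2 k hk) (by simp)
  have hne2 : ∀ k, k + 4 ≤ n → W (k+2) ≠ W (k+3) :=
    fun k hk => Ne.symm (PinelisAux.StrictSide.ne_right (c1 k hk) (by simp))
  -- determinant products
  have p1 : ∀ k, k + 4 ≤ n →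
      0 < det3 (W (k+1)) (W (k+2)) (W (k+3)) * det3 (W (k+1)) (W (k+2)) (W 0) :=
    fun k hk => strictSide_det_prod (hne1 k hk) (c1 k hk)
  have p2 : ∀ k, k + 4 ≤ n →
      0 < det3 (W (k+2)) (W (k+3)) (W (k+1)) * det3 (W (k+2)) (W (k+3)) (W 0) :=
    fun k hk => strictSide_det_prod (hne2 k hk) (c2 k hk)
  have h01 : W 0 ≠ W 1 := by
    intro hEq
    have hp : 0 < det3 (W 1) (W 2) (W 3) * det3 (W 1) (W 2) (W 0) := p1 0 (by omega)
    rw [← hEq, det3_PQP] at hp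
    simp at hp
  have p3 : ∀ k, k + 4 ≤ n →
      0 < det3 (W 0) (W 1) (W (k+2)) * det3 (W 0) (W 1) (W (k+3)) :=
    fun k hk => strictSide_det_prod h01 (c3 k hk)
  -- the orientation sign
  set ε : ℝ := if 0 < det3 (W 0) (W 1) (W 2) then 1 else -1 with hεdef
  have hεpm : ε = 1 ∨ ε = -1 := by
    by_cases h : 0 < det3 (W 0) (W 1) (W 2)
    · left; simp [hεdef, h]
    · right; simp [hεdef, h]
  have hB2ne : det3 (W 0) (W 1) (W 2) ≠ 0 := by
    intro hz
    have hp : 0 < det3 (W 1) (W 2) (W 3) * det3 (W 1) (W 2) (W 0) := p1 0 (by omega)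
    rw [det3_cyc' (W 1) (W 2) (W 0), hz] at hp
    simp at hp
  have hεB2 : 0 < ε * det3 (W 0) (W 1) (W 2) := by
    rcases lt_or_gt_of_ne hB2ne with hlt | hgt
    · have hε : ε = -1 := by simp [hεdef, not_lt.mpr hlt.le]
      rw [hε]; linarith
    · have hε : ε = 1 := by simp [hεdef, hgt]
      rw [hε]; linarith
  -- chain the signs
  have hA : ∀ k, k + 3 ≤ n → 0 < ε * det3 (W (k+1)) (W (k+2)) (W 0) := by
    intro k
    induction k with
    | zero =>
      intro _
      rw [show (0:ℕ)+1 = 1 from rfl, show (0:ℕ)+2 = 2 from rfl, det3_cyc']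
      exact hεB2
    | succ k ih =>
      intro hk
      have ihk := ih (by omega)
      have hp1 := p1 k (by omega)
      have hp2 := p2 k (by omega)
      rw [det3_cyc' (W (k+2)) (W (k+3)) (W (k+1))] at hp2
      -- hp2 : 0 < T * A_{k+1} with T = det3 (W k+1)(W k+2)(W k+3)
      have hAA := PinelisAux.sign_trans hp1 hp2
      exact eps_transfer hεpm (by nlinarith [hAA] :
        0 < det3 (W (k+2)) (W (k+3)) (W 0) * det3 (W (k+1)) (W (k+2)) (W 0)) ihk
  have hB : ∀ k, k + 3 ≤ n → 0 < ε * det3 (W 0) (W 1) (W (k+2)) := by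
    intro k
    induction k with
    | zero => intro _; exact hεB2
    | succ k ih =>
      intro hk
      have ihk := ih (by omega)
      have hp3 := p3 k (by omega)
      exact eps_transfer hεpm (by nlinarith [hp3] :
        0 < det3 (W 0) (W 1) (W (k+3)) * det3 (W 0) (W 1) (W (k+2))) ihk
  have hT : ∀ k, k + 4 ≤ n → 0 < ε * det3 (W (k+1)) (W (k+2)) (W (k+3)) := by
    intro k hk
    exact eps_transfer hεpm (by nlinarith [p1 k hk] :
      0 < det3 (W (k+1)) (W (k+2)) (W (k+3)) * det3 (W (k+1)) (W (k+2)) (W 0))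
      (hA k (by omega))
  have hQ := chain_convex hn W hεpm hT hA hB
  refine ⟨ε, hεpm, ?_⟩
  intro i j hji hjn
  have hVi : W i.val = V i := congrArg V (Fin.ext (Nat.mod_eq_of_lt i.isLt))
  have hVj : W j.val = V j := congrArg V (Fin.ext (Nat.mod_eq_of_lt j.isLt))
  have hVn := hWnxt i
  rw [← hVi, ← hVj, ← hVn]
  have hjlt := j.isLt
  have hilt := i.isLt
  rcases Nat.lt_or_ge (i.val+1) n with hin | hin
  · have hnv : (nxt i).val = i.val + 1 := Nat.mod_eq_of_lt hin
    have hji' : j.val ≠ i.val := fun h => hji (Fin.ext h)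
    have hjn' : j.val ≠ i.val + 1 := fun h => hjn (Fin.ext (by rw [h, hnv]))
    rcases lt_trichotomy j.val i.val with h | h | h
    · rw [det3_cyc']
      exact hQ j.val i.val (i.val+1) h (by omega) (by omega)
    · exact absurd h hji'
    · exact hQ i.val (i.val+1) j.val (by omega) (by omega) (by omega)
  · have hi : i.val = n - 1 := by omega
    have hWi1 : W (i.val + 1) = W 0 := by
      apply congrArg V; apply Fin.ext
      show (i.val + 1) % n = 0 % n
      rw [show i.val + 1 = n by omega, Nat.mod_self, Nat.zero_mod]
    have hji' : j.val ≠ n - 1 := fun h => hji (Fin.ext (by rw [h, hi]))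
    have hjn' : j.val ≠ 0 := by
      intro h
      apply hjn; apply Fin.ext
      rw [h]
      show 0 = (i.val + 1) % n
      rw [show i.val + 1 = n by omega, Nat.mod_self]
    rw [hWi1, show W i.val = W (n-1) by rw [hi], det3_cyc]
    exact hQ 0 j.val (n-1) (by omega) (by omega) (by omega)

end PinelisAux2

namespace PinelisAux4
open PinelisAux PinelisAux3

lemma cross_combo (u P x y : ℝ × ℝ) (a b : ℝ) (hab : a + b = 1) :
    cross u (a • x + b • y - P) = a * cross u (x - P) + b * cross u (y - P) := by
  have hb : b = 1 - a := by linarith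
  subst hb
  simp only [cross, Prod.fst_add, Prod.snd_add, Prod.smul_fst, Prod.smul_snd, smul_eq_mul,
    Prod.fst_sub, Prod.snd_sub]
  ring

lemma cross_shift (u x P Q : ℝ × ℝ) :
    cross u (x - P) = cross u (x - Q) + cross u (Q - P) := by
  simp only [cross, Prod.fst_sub, Prod.snd_sub]; ring

lemma cross_decomp (u1 u2 w : ℝ × ℝ) :
    (cross u1 u2) • w = (cross w u2) • u1 + (cross u1 w) • u2 := by
  apply Prod.ext <;>
    simp only [cross, Prod.smul_fst, Prod.smul_snd, smul_eq_mul, Prod.fst_add, Prod.snd_add] <;>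
    ring

lemma cross_antisymm (u w : ℝ × ℝ) : cross u w = -cross w u := by simp only [cross]; ring

lemma crossSelf (u : ℝ × ℝ) : cross u u = 0 := by simp only [cross]; ring

lemma cross_add_self_right (a b : ℝ × ℝ) : cross a (b + a) = cross a b := by
  simp only [cross, Prod.fst_add, Prod.snd_add]; ring

lemma cross_smul_right (a : ℝ × ℝ) (t : ℝ) (b : ℝ × ℝ) : cross a (t • b) = t * cross a b := by
  simp only [cross, Prod.smul_fst, Prod.smul_snd, smul_eq_mul]; ring

lemma cross_smul_para {u w : ℝ × ℝ} (h : cross u w = 0) (hu : dot2 u u ≠ 0) :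
    w = (dot2 w u / dot2 u u) • u := by
  apply Prod.ext
  · show w.1 = (dot2 w u / dot2 u u) * u.1
    rw [div_mul_eq_mul_div, eq_div_iff hu]
    simp only [dot2, cross] at *
    linear_combination (-u.2) * h
  · show w.2 = (dot2 w u / dot2 u u) * u.2
    rw [div_mul_eq_mul_div, eq_div_iff hu]
    simp only [dot2, cross] at *
    linear_combination u.1 * h

lemma interior_halfplane {w P : ℝ × ℝ} {ε : ℝ} (hεpm : ε = 1 ∨ ε = -1) (hw : w ≠ 0) :
    interior {x : ℝ × ℝ | 0 ≤ ε * cross w (x - P)} = {x | 0 < ε * cross w (x - P)} := by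
  have hεsq : ε * ε = 1 := by rcases hεpm with rfl | rfl <;> norm_num
  have hcont : Continuous fun x : ℝ × ℝ => ε * cross w (x - P) := by
    simp only [cross, Prod.fst_sub, Prod.snd_sub]
    fun_prop
  apply Set.Subset.antisymm
  · intro x hx
    have hx0' : x ∈ {x : ℝ × ℝ | 0 ≤ ε * cross w (x - P)} := interior_subset hx
    have hx0 : 0 ≤ ε * cross w (x - P) := hx0' 
    rcases eq_or_lt_of_le hx0 with heq | hlt
    · exfalso
      obtain ⟨r, hr, hball⟩ := Metric.mem_nhds_iff.mp (mem_interior_iff_mem_nhds.mp hx)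
      set d : ℝ × ℝ := -(ε • rot w) with hd
      have hdlin : ∀ t : ℝ, ε * cross w (x + t • d - P)
          = ε * cross w (x - P) - t * (dot2 w w) := by
        intro t
        simp only [hd, cross, rot, dot2, Prod.fst_add, Prod.snd_add, Prod.smul_fst,
          Prod.smul_snd, Prod.fst_neg, Prod.snd_neg, Prod.fst_sub, Prod.snd_sub, smul_eq_mul]
        linear_combination (-t * (w.1 * w.1 + w.2 * w.2)) * hεsq
      set t := r / (2 * (‖d‖ + 1)) with ht
      have hdn : (0:ℝ) ≤ ‖d‖ := norm_nonneg d
      have htpos : 0 < t := div_pos hr (by positivity)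
      have hy : x + t • d ∈ Metric.ball x r := by
        rw [Metric.mem_ball, dist_eq_norm]
        have he : x + t • d - x = t • d := by abel
        rw [he, norm_smul, Real.norm_eq_abs, abs_of_pos htpos]
        rw [ht, div_mul_eq_mul_div, div_lt_iff₀ (by positivity)]
        nlinarith [hdn, hr]
      have hmem' : x + t • d ∈ {x : ℝ × ℝ | 0 ≤ ε * cross w (x - P)} := hball hy
      have hmem : 0 ≤ ε * cross w (x + t • d - P) := hmem' 
      rw [hdlin t, ← heq] at hmem
      have hww : 0 < dot2 w w := dot2_self_pos hw
      nlinarith [mul_pos htpos hww]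
    · exact hlt
  · exact interior_maximal (Set.setOf_subset_setOf.mpr fun y hy => le_of_lt hy)
      (isOpen_lt continuous_const hcont)

end PinelisAux4

namespace PinelisAux5
open PinelisAux PinelisAux3 PinelisAux4

variable {n : ℕ} {V : Fin n → ℝ × ℝ} {ε : ℝ}

lemma CE_convex (hn : 4 ≤ n) (hεpm : ε = 1 ∨ ε = -1) (hCE : CE V ε) :
    IsConvexPolygon V := by
  have hn0 : 0 < n := by omega
  haveI : Nonempty (Fin n) := ⟨⟨0, hn0⟩⟩
  have hεne : ε ≠ 0 := by rcases hεpm with rfl | rfl <;> norm_num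
  -- index facts
  have hcases : ∀ i : Fin n, ((nxt i).val = i.val + 1 ∧ i.val + 1 < n)
      ∨ ((nxt i).val = 0 ∧ i.val = n - 1) := by
    intro i
    have := i.isLt
    rcases Nat.lt_or_ge (i.val + 1) n with h | h
    · exact Or.inl ⟨Nat.mod_eq_of_lt h, h⟩
    · refine Or.inr ⟨?_, by omega⟩
      show (i.val + 1) % n = 0
      rw [show i.val + 1 = n by omega, Nat.mod_self]
  have hne_nxt : ∀ i : Fin n, nxt i ≠ i := by
    intro i
    apply fin_ne
    rcases hcases i with ⟨h1, h2⟩ | ⟨h1, h2⟩ <;> (rw [h1]; omega)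
  have hA2 : ∀ i : Fin n, nxt (nxt i) ≠ i := by
    intro i
    apply fin_ne
    rcases hcases i with ⟨h1, h2⟩ | ⟨h1, h2⟩ <;>
      rcases hcases (nxt i) with ⟨h3, h4⟩ | ⟨h3, h4⟩ <;> rw [h3] <;> rw [h1] at * <;> omega
  have hprv : ∀ i : Fin n, ∃ p : Fin n, nxt p = i := by
    intro i
    rcases Nat.eq_zero_or_pos i.val with h0 | hp
    · refine ⟨⟨n-1, by omega⟩, Fin.ext ?_⟩
      show (n-1+1) % n = i.val
      rw [show n-1+1 = n by omega, Nat.mod_self, h0]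
    · refine ⟨⟨i.val - 1, by omega⟩, Fin.ext ?_⟩
      show (i.val-1+1) % n = i.val
      rw [show i.val-1+1 = i.val by omega]
      exact Nat.mod_eq_of_lt i.isLt
  -- edge vectors nonzero
  have hu_ne : ∀ i : Fin n, V (nxt i) - V i ≠ 0 := by
    intro i h0
    have h := hCE i (nxt (nxt i)) (hA2 i) (fun hEq => hne_nxt (nxt i) hEq)
    rw [det3_eq_cross, h0] at h
    simp only [cross, Prod.fst_zero, Prod.snd_zero, zero_mul, sub_zero] at h
    simp at h
  -- positive corner determinant at consecutive edges
  have hDD : ∀ p i : Fin n, nxt p = i →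
      0 < ε * cross (V (nxt p) - V p) (V (nxt i) - V i) := by
    intro p i hp
    have ne2 : nxt i ≠ nxt p := by rw [hp]; exact hne_nxt i
    have ne1 : nxt i ≠ p := fun hEq => hA2 i (by rw [hEq, hp])
    have h := hCE p (nxt i) ne1 ne2
    rw [det3_eq_cross] at h
    rw [hp] at h
    have e : V (nxt i) - V p = (V (nxt i) - V i) + (V i - V p) := by abel
    rw [e, cross_add_self_right] at h
    rw [hp]
    exact h
  -- edge inequality in cross form
  have hEdge : ∀ i j : Fin n, j ≠ i → j ≠ nxt i →
      0 < ε * cross (V (nxt i) - V i) (V j - V i) := by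
    intro i j h1 h2
    have h := hCE i j h1 h2
    rwa [det3_eq_cross] at h
  -- the intersection of closed half-planes
  have hrangeK : Set.range V ⊆ ⋂ i : Fin n, {x | 0 ≤ ε * cross (V (nxt i) - V i) (x - V i)} := by
    rintro _ ⟨j, rfl⟩
    refine Set.mem_iInter.mpr fun i => ?_
    show 0 ≤ ε * cross (V (nxt i) - V i) (V j - V i)
    by_cases h1 : j = i
    · subst h1; rw [sub_self]
      simp [cross]
    by_cases h2 : j = nxt i
    · subst h2; rw [crossSelf]; simp
    · exact le_of_lt (hEdge i j h1 h2)
  have hKconv : Convex ℝ (⋂ i : Fin n, {x | 0 ≤ ε * cross (V (nxt i) - V i) (x - V i)}) := by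
    apply convex_iInter; intro i
    intro x hx y hy a b ha hb hab
    have hx' : 0 ≤ ε * cross (V (nxt i) - V i) (x - V i) := hx
    have hy' : 0 ≤ ε * cross (V (nxt i) - V i) (y - V i) := hy
    show 0 ≤ ε * cross (V (nxt i) - V i) (a • x + b • y - V i)
    rw [cross_combo _ _ _ _ _ _ hab]
    nlinarith [mul_nonneg ha hx', mul_nonneg hb hy']
  have hclosed : IsClosed (convexHull ℝ (Set.range V)) := (Set.finite_range V).isClosed_convexHull (𝕜 := ℝ)
  have hullK : convexHull ℝ (Set.range V)
      = ⋂ i : Fin n, {x | 0 ≤ ε * cross (V (nxt i) - V i) (x - V i)} := by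
    apply Set.Subset.antisymm
    · exact convexHull_min hrangeK hKconv
    · intro x hx
      by_contra hnot
      obtain ⟨g, c, hgs, hgx⟩ :=
        geometric_hahn_banach_closed_point (convex_convexHull ℝ _) hclosed hnot
      obtain ⟨j, hj⟩ := Finite.exists_max (fun k : Fin n => g (V k))
      obtain ⟨p, hp⟩ := hprv j
      have hD := hDD p j hp
      rw [hp] at hD
      -- hD : 0 < ε * cross (V j - V p) (V (nxt j) - V j)
      have hx1 : 0 ≤ ε * cross (V j - V p) (x - V j) := by
        have h : 0 ≤ ε * cross (V (nxt p) - V p) (x - V p) := Set.mem_iInter.mp hx p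
        rw [hp] at h
        have e := cross_shift (V j - V p) x (V p) (V j)
        rw [crossSelf, add_zero] at e
        rwa [e] at h
      have hx2 : 0 ≤ ε * cross (V (nxt j) - V j) (x - V j) := Set.mem_iInter.mp hx j
      -- decompose x - V j over the corner cone and apply g
      have hdec := cross_decomp (V j - V p) (V (nxt j) - V j) (x - V j)
      have hg := congrArg g hdec
      simp only [map_add, map_smul, smul_eq_mul, map_sub] at hg
      have hgw : 0 < g x - g (V j) := by
        have h1 : g (V j) < c := hgs _ (subset_convexHull ℝ _ ⟨j, rfl⟩)
        linarith [hgx]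
      have hgu1 : 0 ≤ g (V j) - g (V p) := sub_nonneg.mpr (hj p)
      have hgu2 : g (V (nxt j)) - g (V j) ≤ 0 := sub_nonpos.mpr (hj (nxt j))
      have hB : ε * cross (x - V j) (V (nxt j) - V j) ≤ 0 := by
        rw [cross_antisymm]
        nlinarith [hx2]
      have t1 : 0 < (ε * cross (V j - V p) (V (nxt j) - V j)) * (g x - g (V j)) :=
        mul_pos hD hgw
      have t2 : 0 ≤ (-(ε * cross (x - V j) (V (nxt j) - V j))) * (g (V j) - g (V p)) :=
        mul_nonneg (by linarith) hgu1
      have t3 : 0 ≤ (ε * cross (V j - V p) (x - V j)) * (-(g (V (nxt j)) - g (V j))) :=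
        mul_nonneg hx1 (by linarith)
      have hgε : (ε * cross (V j - V p) (V (nxt j) - V j)) * (g x - g (V j))
          = (ε * cross (x - V j) (V (nxt j) - V j)) * (g (V j) - g (V p))
            + (ε * cross (V j - V p) (x - V j)) * (g (V (nxt j)) - g (V j)) := by
        linear_combination ε * hg
      nlinarith [hgε, t1, t2, t3]
  -- interior
  have hIntK : interior (convexHull ℝ (Set.range V))
      = ⋂ i : Fin n, {x | 0 < ε * cross (V (nxt i) - V i) (x - V i)} := by
    rw [hullK, interior_iInter_of_finite]
    exact Set.iInter_congr fun i => interior_halfplane hεpm (hu_ne i)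
  -- segments are in the hull and on the boundary lines
  have hSegK : ∀ i : Fin n, segment ℝ (V i) (V (nxt i)) ⊆ convexHull ℝ (Set.range V) :=
    fun i => (convex_convexHull ℝ _).segment_subset
      (subset_convexHull ℝ _ ⟨i, rfl⟩) (subset_convexHull ℝ _ ⟨nxt i, rfl⟩)
  have hSegF : ∀ i : Fin n, ∀ x ∈ segment ℝ (V i) (V (nxt i)),
      ε * cross (V (nxt i) - V i) (x - V i) = 0 := by
    rintro i x ⟨a, b, ha, hb, hab, rfl⟩
    rw [cross_combo _ _ _ _ _ _ hab, sub_self, crossSelf]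
    simp [cross]
  -- points of K on a boundary line are on the corresponding segment
  have hKline : ∀ i : Fin n, ∀ x,
      x ∈ (⋂ i : Fin n, {x | 0 ≤ ε * cross (V (nxt i) - V i) (x - V i)}) →
      ε * cross (V (nxt i) - V i) (x - V i) = 0 → x ∈ segment ℝ (V i) (V (nxt i)) := by
    intro i x hx hzero
    obtain ⟨p, hp⟩ := hprv i
    have hui := hu_ne i
    have huu : dot2 (V (nxt i) - V i) (V (nxt i) - V i) ≠ 0 := ne_of_gt (dot2_self_pos hui)
    have hcr : cross (V (nxt i) - V i) (x - V i) = 0 :=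
      (mul_eq_zero.mp hzero).resolve_left hεne
    set t : ℝ := dot2 (x - V i) (V (nxt i) - V i) / dot2 (V (nxt i) - V i) (V (nxt i) - V i)
      with htdef
    have hxt : x - V i = t • (V (nxt i) - V i) := cross_smul_para hcr huu
    -- lower bound : t ≥ 0 from the previous edge
    have hD1 := hDD p i hp
    rw [hp] at hD1
    have hp1 : 0 ≤ ε * cross (V (nxt p) - V p) (x - V p) := Set.mem_iInter.mp hx p
    rw [hp] at hp1
    have e1 : x - V p = (x - V i) + (V i - V p) := by abel
    rw [e1, hxt] at hp1
    have e2 : cross (V i - V p) (t • (V (nxt i) - V i) + (V i - V p))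
        = t * cross (V i - V p) (V (nxt i) - V i) := by
      rw [show ∀ a b : ℝ × ℝ, ∀ s : ℝ, cross a (s • b + a) = s * cross a b from
        fun a b s => by simp only [cross, Prod.fst_add, Prod.snd_add, Prod.smul_fst,
          Prod.smul_snd, smul_eq_mul]; ring]
    rw [e2] at hp1
    have ht0 : 0 ≤ t := by nlinarith [hD1, hp1]
    -- upper bound : t ≤ 1 from the following edge
    have hD2 := hDD i (nxt i) rfl
    have hp2 : 0 ≤ ε * cross (V (nxt (nxt i)) - V (nxt i)) (x - V (nxt i)) :=
      Set.mem_iInter.mp hx (nxt i)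
    have e3 : x - V (nxt i) = (t - 1) • (V (nxt i) - V i) := by
      have : x - V (nxt i) = (x - V i) - (V (nxt i) - V i) := by abel
      rw [this, hxt]
      rw [sub_smul, one_smul]
    rw [e3, cross_smul_right] at hp2
    have hcs : cross (V (nxt (nxt i)) - V (nxt i)) (V (nxt i) - V i)
        = -cross (V (nxt i) - V i) (V (nxt (nxt i)) - V (nxt i)) := cross_antisymm _ _
    rw [hcs] at hp2
    have ht1 : t ≤ 1 := by nlinarith [hD2, hp2]
    -- conclude
    refine ⟨1 - t, t, by linarith, ht0, by ring, ?_⟩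
    have : x = V i + t • (V (nxt i) - V i) := by
      rw [← hxt]; abel
    rw [this]
    rw [smul_sub]
    module
  -- main set equality
  show (⋃ i : Fin n, segment ℝ (V i) (V (nxt i))) = frontier (convexHull ℝ (Set.range V))
  rw [hclosed.frontier_eq]
  apply Set.Subset.antisymm
  · rintro x hx
    obtain ⟨i, hseg⟩ := Set.mem_iUnion.mp hx
    refine ⟨hSegK i hseg, ?_⟩
    intro hint
    rw [hIntK] at hint
    have h := Set.mem_iInter.mp hint i
    have h0 := hSegF i x hseg
    have : (0:ℝ) < ε * cross (V (nxt i) - V i) (x - V i) := h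
    rw [h0] at this
    exact lt_irrefl _ this
  · intro x hx
    obtain ⟨hxk, hxint⟩ := hx
    rw [hIntK] at hxint
    rw [hullK] at hxk
    obtain ⟨i, hi⟩ : ∃ i : Fin n, ¬ (0 < ε * cross (V (nxt i) - V i) (x - V i)) := by
      by_contra hall
      push_neg at hall
      exact hxint (Set.mem_iInter.mpr fun i => hall i)
    have hge : 0 ≤ ε * cross (V (nxt i) - V i) (x - V i) := Set.mem_iInter.mp hxk i
    have heq : ε * cross (V (nxt i) - V i) (x - V i) = 0 := le_antisymm (not_lt.mp hi) hge
    exact Set.mem_iUnion.mpr ⟨i, hKline i x hxk heq⟩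

end PinelisAux5

namespace PinelisAux6
open PinelisAux PinelisAux3 PinelisAux4

variable {n : ℕ} {V : Fin n → ℝ × ℝ}

set_option maxHeartbeats 1600000 in
lemma convex_to_CE (hn : 4 ≤ n) (hConv : IsConvexPolygon V) (hQS : QuasiStrict V) :
    ∃ ε : ℝ, (ε = 1 ∨ ε = -1) ∧ CE V ε := by
  have hn0 : 0 < n := by omega
  -- index facts (as in CE_convex)
  have hcases : ∀ i : Fin n, ((nxt i).val = i.val + 1 ∧ i.val + 1 < n)
      ∨ ((nxt i).val = 0 ∧ i.val = n - 1) := by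
    intro i
    have := i.isLt
    rcases Nat.lt_or_ge (i.val + 1) n with h | h
    · exact Or.inl ⟨Nat.mod_eq_of_lt h, h⟩
    · refine Or.inr ⟨?_, by omega⟩
      show (i.val + 1) % n = 0
      rw [show i.val + 1 = n by omega, Nat.mod_self]
  have hne_nxt : ∀ i : Fin n, nxt i ≠ i := by
    intro i
    apply fin_ne
    rcases hcases i with ⟨h1, h2⟩ | ⟨h1, h2⟩ <;> (rw [h1]; omega)
  have hA2 : ∀ i : Fin n, nxt (nxt i) ≠ i := by
    intro i
    apply fin_ne
    rcases hcases i with ⟨h1, h2⟩ | ⟨h1, h2⟩ <;>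
      rcases hcases (nxt i) with ⟨h3, h4⟩ | ⟨h3, h4⟩ <;> rw [h3] <;> rw [h1] at * <;> omega
  -- adjacent vertices are distinct
  have hadj : ∀ i : Fin n, V i ≠ V (nxt i) := by
    intro i hEq
    apply hQS i (nxt (nxt i)) (hA2 i) (hne_nxt (nxt i))
    rw [← hEq, Set.insert_idem]
    exact collinear_pair ℝ _ _
  have hclosed : IsClosed (convexHull ℝ (Set.range V)) := (Set.finite_range V).isClosed_convexHull (𝕜 := ℝ)
  -- the hull has nonempty interior
  have htop : affineSpan ℝ (Set.range V) = ⊤ := by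
    set z : Fin n := ⟨0, hn0⟩
    have h012 : ¬ Collinear ℝ ({V z, V (nxt z), V (nxt (nxt z))} : Set (ℝ × ℝ)) :=
      hQS z (nxt (nxt z)) (hA2 z) (hne_nxt (nxt z))
    have hai : AffineIndependent ℝ ![V z, V (nxt z), V (nxt (nxt z))] :=
      affineIndependent_iff_not_collinear_set.mpr h012
    have hcard : Fintype.card (Fin 3) = Module.finrank ℝ (ℝ × ℝ) + 1 := by
      simp
    have htop3 := hai.affineSpan_eq_top_iff_card_eq_finrank_add_one.mpr hcard
    have hrange : Set.range ![V z, V (nxt z), V (nxt (nxt z))]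
        = ({V z, V (nxt z), V (nxt (nxt z))} : Set (ℝ × ℝ)) := by
      ext x
      simp [Matrix.range_cons, Matrix.range_empty]
      tauto
    have hsub : ({V z, V (nxt z), V (nxt (nxt z))} : Set (ℝ × ℝ)) ⊆ Set.range V := by
      rintro x (rfl | rfl | rfl) <;> exact ⟨_, rfl⟩
    have hle : (⊤ : AffineSubspace ℝ (ℝ × ℝ)) ≤ affineSpan ℝ (Set.range V) := by
      rw [← htop3, hrange]
      exact affineSpan_mono ℝ hsub
    exact le_antisymm le_top hle
  have hIntNe : (interior (convexHull ℝ (Set.range V))).Nonempty :=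
    interior_convexHull_nonempty_iff_affineSpan_eq_top.mpr htop
  obtain ⟨w, hw⟩ := hIntNe
  -- per-edge strict side with a sign
  have hedge : ∀ i : Fin n, ∃ s : ℝ, (s = 1 ∨ s = -1) ∧
      ∀ j : Fin n, j ≠ i → j ≠ nxt i → 0 < s * det3 (V i) (V (nxt i)) (V j) := by
    intro i
    set M := midpoint ℝ (V i) (V (nxt i)) with hM
    have hMseg : M ∈ segment ℝ (V i) (V (nxt i)) := midpoint_mem_segment _ _
    have hMfr : M ∈ frontier (convexHull ℝ (Set.range V)) := by
      rw [← hConv]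
      exact Set.mem_iUnion.mpr ⟨i, hMseg⟩
    rw [hclosed.frontier_eq] at hMfr
    obtain ⟨hMmem, hMni⟩ := hMfr
    obtain ⟨g, hg⟩ := geometric_hahn_banach_open_point
      ((convex_convexHull ℝ (Set.range V)).interior) isOpen_interior hMni
    have hgw : g w < g M := hg w hw
    have hle : ∀ a ∈ convexHull ℝ (Set.range V), g a ≤ g M := by
      intro a ha
      by_contra hlt
      push_neg at hlt
      have hgaw : g w < g a := lt_trans hgw hlt
      set t : ℝ := (g a - g M) / (2 * (g a - g w)) with ht
      have ht0 : 0 < t := div_pos (by linarith) (by linarith)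
      have ht2 : t ≤ 1/2 := by
        rw [ht, div_le_iff₀ (by linarith)]
        linarith
      have hz := (convex_convexHull ℝ (Set.range V)).combo_self_interior_mem_interior
        ha hw (a := 1 - t) (b := t) (by linarith) ht0 (by ring)
      have hzM := hg _ hz
      rw [map_add, map_smul, map_smul, smul_eq_mul, smul_eq_mul] at hzM
      have htval : t * (2 * (g a - g w)) = g a - g M := by
        rw [ht]
        exact div_mul_cancel₀ _ (ne_of_gt (by linarith : (0:ℝ) < 2 * (g a - g w)))
      nlinarith [hzM, htval]
    have hVi : g (V i) ≤ g M := hle _ (subset_convexHull ℝ _ ⟨i, rfl⟩)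
    have hVn : g (V (nxt i)) ≤ g M := hle _ (subset_convexHull ℝ _ ⟨nxt i, rfl⟩)
    have hM2 : g M = (g (V i) + g (V (nxt i))) / 2 := by
      rw [hM, midpoint_eq_smul_add, map_smul, map_add, smul_eq_mul, invOf_eq_inv]
      ring
    have hMi : g (V i) = g M := by linarith
    have hMn : g (V (nxt i)) = g M := by linarith
    -- coordinates of g
    set p : ℝ := g (1, 0) with hpdef
    set q : ℝ := g (0, 1) with hqdef
    have hrepr : ∀ x : ℝ × ℝ, g x = x.1 * p + x.2 * q := by
      intro x
      have hx : x = x.1 • ((1:ℝ), (0:ℝ)) + x.2 • ((0:ℝ), (1:ℝ)) := by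
        apply Prod.ext <;> simp
      conv_lhs => rw [hx]
      rw [map_add, map_smul, map_smul, smul_eq_mul, smul_eq_mul, hpdef, hqdef]
    have hgne : ¬ (p = 0 ∧ q = 0) := by
      rintro ⟨e1, e2⟩
      rw [hrepr w, hrepr M, e1, e2] at hgw
      simp at hgw
    have hN : 0 < p * p + q * q := by
      rcases not_and_or.mp hgne with h | h
      · nlinarith [mul_self_nonneg q, mul_self_pos.mpr h]
      · nlinarith [mul_self_nonneg p, mul_self_pos.mpr h]
    -- strict inequality at other vertices
    have hlt : ∀ j : Fin n, j ≠ i → j ≠ nxt i → g (V j) < g M := by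
      intro j h1 h2
      rcases lt_or_eq_of_le (hle _ (subset_convexHull ℝ _ ⟨j, rfl⟩)) with h | h
      · exact h
      exfalso
      apply hQS i j h1 h2
      rw [collinear_iff_of_mem (Set.mem_insert (V i) _)]
      refine ⟨(-q, p), ?_⟩
      intro x hx
      have hgx : g x = g (V i) := by
        rcases hx with rfl | rfl | rfl
        · rfl
        · rw [hMn, hMi]
        · rw [h, hMi]
      have hw0 : (x - V i).1 * p + (x - V i).2 * q = 0 := by
        have := hrepr (x - V i)
        rw [map_sub, hgx, sub_self] at this
        linarith [this]
      refine ⟨(p * (x - V i).2 - q * (x - V i).1) / (p * p + q * q), ?_⟩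
      have hNne : p * p + q * q ≠ 0 := ne_of_gt hN
      apply Prod.ext
      · show x.1 = (p * (x - V i).2 - q * (x - V i).1) / (p * p + q * q) * (-q) + (V i).1
        have hkey : x.1 - (V i).1
            = (p * (x - V i).2 - q * (x - V i).1) / (p * p + q * q) * (-q) := by
          rw [div_mul_eq_mul_div, eq_div_iff hNne]
          simp only [Prod.fst_sub, Prod.snd_sub] at hw0 ⊢
          linear_combination p * hw0
        linarith [hkey]
      · show x.2 = (p * (x - V i).2 - q * (x - V i).1) / (p * p + q * q) * p + (V i).2
        have hkey : x.2 - (V i).2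
            = (p * (x - V i).2 - q * (x - V i).1) / (p * p + q * q) * p := by
          rw [div_mul_eq_mul_div, eq_div_iff hNne]
          simp only [Prod.fst_sub, Prod.snd_sub] at hw0 ⊢
          linear_combination q * hw0
        linarith [hkey]
    -- normal decomposition : (p,q) = τ • rot u
    set u : ℝ × ℝ := V (nxt i) - V i with hu
    have hu0 : u ≠ 0 := fun h => (hadj i) (by rw [hu] at h; have := sub_eq_zero.mp h; exact this.symm)
    have hgu : u.1 * p + u.2 * q = 0 := by
      have := hrepr u
      rw [hu, map_sub, hMn, hMi, sub_self] at this
      linarith [this]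
    have hrot : cross (rot u) (p, q) = 0 := by
      simp only [cross, rot]
      linarith [hgu]
    have hrotdot : dot2 (rot u) (rot u) ≠ 0 := by
      have : dot2 (rot u) (rot u) = dot2 u u := by simp only [dot2, rot]; ring
      rw [this]
      exact ne_of_gt (dot2_self_pos hu0)
    have hpq := cross_smul_para hrot hrotdot
    set τ : ℝ := dot2 (p, q) (rot u) / dot2 (rot u) (rot u) with hτ
    have hp' : p = τ * (-u.2) := by
      have := congrArg Prod.fst hpq
      simpa [rot] using this
    have hq' : q = τ * u.1 := by
      have := congrArg Prod.snd hpq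
      simpa [rot] using this
    -- g-difference formula
    have hform : ∀ j : Fin n, g (V j) - g (V i) = τ * det3 (V i) (V (nxt i)) (V j) := by
      intro j
      rw [det3_eq_cross, ← hu]
      have := hrepr (V j - V i)
      rw [map_sub] at this
      rw [this, hp', hq']
      simp only [cross, Prod.fst_sub, Prod.snd_sub]
      ring
    have hneg : ∀ j : Fin n, j ≠ i → j ≠ nxt i → τ * det3 (V i) (V (nxt i)) (V j) < 0 := by
      intro j h1 h2
      rw [← hform j]
      have := hlt j h1 h2
      linarith [hMi]
    have hτne : τ ≠ 0 := by
      intro h0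
      have := hneg (nxt (nxt i)) (hA2 i) (hne_nxt (nxt i))
      rw [h0, zero_mul] at this
      exact lt_irrefl _ this
    refine ⟨if 0 < τ then -1 else 1, by split <;> simp, ?_⟩
    intro j h1 h2
    have hj := hneg j h1 h2
    split
    · next hτpos => nlinarith [hj]
    · next hτpos =>
      have hτneg : τ < 0 := lt_of_le_of_ne (not_lt.mp hτpos) hτne
      nlinarith [hj]
  choose s hspm hspos using hedge
  have hcons : ∀ i : Fin n, s (nxt i) = s i := by
    intro i
    have h1 : 0 < s i * det3 (V i) (V (nxt i)) (V (nxt (nxt i))) :=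
      hspos i (nxt (nxt i)) (hA2 i) (hne_nxt (nxt i))
    have h2 : 0 < s (nxt i) * det3 (V (nxt i)) (V (nxt (nxt i))) (V i) :=
      hspos (nxt i) i (Ne.symm (hne_nxt i)) (Ne.symm (hA2 i))
    rw [← det3_cyc] at h2
    rcases hspm i with e1 | e1 <;> rcases hspm (nxt i) with e2 | e2
    · rw [e1, e2]
    · exfalso; rw [e1] at h1; rw [e2] at h2; nlinarith [h1, h2]
    · exfalso; rw [e1] at h1; rw [e2] at h2; nlinarith [h1, h2]
    · rw [e1, e2]
  have hall : ∀ i : Fin n, s i = s ⟨0, hn0⟩ := by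
    have hk : ∀ k (hkn : k < n), s ⟨k, hkn⟩ = s ⟨0, hn0⟩ := by
      intro k
      induction k with
      | zero => intro hkn; exact congrArg s (Fin.ext rfl)
      | succ k ih =>
        intro hkn
        have hnxtk : nxt (⟨k, by omega⟩ : Fin n) = ⟨k+1, hkn⟩ :=
          Fin.ext (by show (k+1) % n = k+1; exact Nat.mod_eq_of_lt hkn)
        rw [← hnxtk, hcons, ih (by omega)]
    intro i
    have : s i = s ⟨i.val, i.isLt⟩ := congrArg s (Fin.ext rfl)
    rw [this, hk _ _]
  refine ⟨s ⟨0, hn0⟩, hspm _, ?_⟩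
  intro i j h1 h2
  rw [← hall i]
  exact hspos i j h1 h2

end PinelisAux6

/-- Pinelis, Lemma 4: an n-gon with n ≥ 4 is quasi-strictly convex iff the
3(n−3) strict one-side conditions hold for all i ∈ {2,…,n−2}. -/
theorem stmt_6 (n : ℕ) (hn : 4 ≤ n) (V : Fin n → ℝ × ℝ) :
    (IsConvexPolygon V ∧ QuasiStrict V) ↔
      (∀ i : Fin n, 2 ≤ i.val → i.val ≤ n - 2 →
        StrictSide (V ⟨i.val - 1, lt_of_le_of_lt (Nat.sub_le _ _) i.isLt⟩) (V i)
          {V (nxt i), V ⟨0, by omega⟩} ∧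
        StrictSide (V i) (V (nxt i))
          {V ⟨i.val - 1, lt_of_le_of_lt (Nat.sub_le _ _) i.isLt⟩, V ⟨0, by omega⟩} ∧
        StrictSide (V ⟨0, by omega⟩) (V ⟨1, by omega⟩) {V i, V (nxt i)}) := by
  constructor
  · rintro ⟨hConv, hQS⟩
    obtain ⟨ε, hεpm, hCE⟩ := PinelisAux6.convex_to_CE hn hConv hQS
    exact PinelisAux3.CE_rhs hn hεpm hCE
  · intro hR
    obtain ⟨ε, hεpm, hCE⟩ := PinelisAux2.rhs_to_CE V hn hR
    exact ⟨PinelisAux5.CE_convex hn hεpm hCE, PinelisAux3.CE_quasiStrict hεpm hCE⟩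
end

section
/- If a polygon P = (V_0,…,V_{n−1}) is quasi-strictly convex, then for every index m, the (n−1)-gon obtained by deleting vertex V_m is quasi-strictly convex. -/
namespace PGaux


/-- 2D cross product. -/
def cross (a b : ℝ × ℝ) : ℝ := a.1 * b.2 - a.2 * b.1

lemma cross_zero_imp {u w : ℝ × ℝ} (h : cross u w = 0) (hu : u ≠ 0) :
    ∃ t : ℝ, w = t • u := by
  have h' : u.1 * w.2 - u.2 * w.1 = 0 := h
  have hu' : u.1 ≠ 0 ∨ u.2 ≠ 0 := by
    by_contra hc; push_neg at hc; exact hu (Prod.ext hc.1 hc.2)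
  rcases hu' with hx | hx
  · refine ⟨w.1 / u.1, Prod.ext ?_ ?_⟩
    · simp only [Prod.smul_fst, smul_eq_mul]
      field_simp
    · simp only [Prod.smul_snd, smul_eq_mul]
      rw [div_mul_eq_mul_div, eq_div_iff hx]
      nlinarith [h']
  · refine ⟨w.2 / u.2, Prod.ext ?_ ?_⟩
    · simp only [Prod.smul_fst, smul_eq_mul]
      rw [div_mul_eq_mul_div, eq_div_iff hx]
      nlinarith [h']
    · simp only [Prod.smul_snd, smul_eq_mul]
      field_simp

lemma collinear_iff_cross {A B C : ℝ × ℝ} :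
    Collinear ℝ ({A, B, C} : Set (ℝ × ℝ)) ↔ cross (B - A) (C - A) = 0 := by
  rw [collinear_iff_exists_forall_eq_smul_vadd]
  constructor
  · rintro ⟨p₀, v, hv⟩
    obtain ⟨ra, ha⟩ := hv A (by simp)
    obtain ⟨rb, hb⟩ := hv B (by simp)
    obtain ⟨rc, hc⟩ := hv C (by simp)
    rw [ha, hb, hc]
    simp only [cross, vadd_eq_add, Prod.fst_add, Prod.snd_add, Prod.fst_sub, Prod.snd_sub,
      Prod.smul_fst, Prod.smul_snd, smul_eq_mul]
    ring
  · intro h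
    by_cases hAB : B = A
    · refine ⟨A, C - A, ?_⟩
      rintro p hp
      simp only [Set.mem_insert_iff, Set.mem_singleton_iff] at hp
      rcases hp with rfl | rfl | rfl
      · exact ⟨0, by simp⟩
      · exact ⟨0, by simp [hAB]⟩
      · exact ⟨1, by simp⟩
    · have hBA : B - A ≠ 0 := sub_ne_zero.mpr hAB
      obtain ⟨t, ht⟩ := cross_zero_imp h hBA
      refine ⟨A, B - A, ?_⟩
      rintro p hp
      simp only [Set.mem_insert_iff, Set.mem_singleton_iff] at hp
      rcases hp with rfl | rfl | rfl
      · exact ⟨0, by simp⟩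
      · exact ⟨1, by simp⟩
      · exact ⟨t, by rw [vadd_eq_add, ← ht]; abel⟩

/-- Decompose any vector over two vectors with nonzero cross product. -/
lemma exists_coords {u v : ℝ × ℝ} (h : cross u v ≠ 0) (w : ℝ × ℝ) :
    ∃ s t : ℝ, w = s • u + t • v := by
  have hD : u.1 * v.2 - u.2 * v.1 ≠ 0 := h
  refine ⟨(w.1 * v.2 - w.2 * v.1) / (u.1 * v.2 - u.2 * v.1),
          (u.1 * w.2 - u.2 * w.1) / (u.1 * v.2 - u.2 * v.1), Prod.ext ?_ ?_⟩ <;>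
    simp only [Prod.fst_add, Prod.snd_add, Prod.smul_fst, Prod.smul_snd, smul_eq_mul] <;>
    rw [div_mul_eq_mul_div, div_mul_eq_mul_div, ← add_div, eq_div_iff hD] <;> ring

lemma dot_eq_zero_of_ortho {A B C nv : ℝ × ℝ}
    (hcr : cross (B - A) (C - A) = 0) (hAB : A ≠ B) (h0 : dot2 nv (B - A) = 0) :
    dot2 nv (C - A) = 0 := by
  have hBA : B - A ≠ 0 := sub_ne_zero.mpr (Ne.symm hAB)
  have e1 : (B - A).1 * dot2 nv (C - A)
      = (C - A).1 * dot2 nv (B - A) + nv.2 * cross (B - A) (C - A) := by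
    simp only [dot2, cross]; ring
  have e2 : (B - A).2 * dot2 nv (C - A)
      = (C - A).2 * dot2 nv (B - A) - nv.1 * cross (B - A) (C - A) := by
    simp only [dot2, cross]; ring
  rw [hcr, h0] at e1 e2
  simp only [mul_zero, zero_mul, add_zero, sub_zero, zero_sub, zero_add] at e1 e2
  by_contra hne
  exact hBA (Prod.ext (by
    have := mul_eq_zero.mp e1; tauto) (by
    have := mul_eq_zero.mp e2; tauto))

/-- If `nv ≠ 0` is orthogonal to `B - A` and has positive product with `C - A`,
the three points are not collinear. -/
lemma not_collinear_of_strict {A B C nv : ℝ × ℝ} (hAB : A ≠ B)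
    (h0 : dot2 nv (B - A) = 0) (h1 : 0 < dot2 nv (C - A)) :
    ¬ Collinear ℝ ({A, B, C} : Set (ℝ × ℝ)) := by
  rw [collinear_iff_cross]
  intro hcr
  have := dot_eq_zero_of_ortho hcr hAB h0
  rw [this] at h1
  exact lt_irrefl 0 h1



/-- The linear map `dot2 nv`. -/
def dotL (nv : ℝ × ℝ) : (ℝ × ℝ) →ₗ[ℝ] ℝ where
  toFun w := dot2 nv w
  map_add' a b := by simp [dot2]; ring
  map_smul' r a := by simp [dot2, Prod.smul_fst, Prod.smul_snd]; ring

@[simp] lemma dotL_apply (nv w : ℝ × ℝ) : dotL nv w = dot2 nv w := rfl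

lemma dot2_sub (nv a b : ℝ × ℝ) : dot2 nv (a - b) = dot2 nv a - dot2 nv b := by
  simp [dot2]; ring

lemma dot2_combo {k : ℕ} (nv P : ℝ × ℝ) (lam : Fin k → ℝ) (W : Fin k → ℝ × ℝ)
    (h1 : ∑ j, lam j = 1) :
    dot2 nv (∑ j, lam j • W j - P) = ∑ j, lam j * dot2 nv (W j - P) := by
  have hP : ∑ j, lam j • W j - P = ∑ j, lam j • (W j - P) := by
    simp only [smul_sub, Finset.sum_sub_distrib, ← Finset.sum_smul, h1, one_smul]
  rw [hP, ← dotL_apply, map_sum]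
  simp

lemma mem_hull_iff {k : ℕ} (W : Fin k → ℝ × ℝ) (x : ℝ × ℝ) :
    x ∈ convexHull ℝ (Set.range W) ↔
      ∃ lam : Fin k → ℝ, (∀ j, 0 ≤ lam j) ∧ ∑ j, lam j = 1 ∧ ∑ j, lam j • W j = x := by
  constructor
  · intro hx
    rw [convexHull_range_eq_exists_affineCombination] at hx
    obtain ⟨s, w, h0, h1, hx⟩ := hx
    refine ⟨fun j => if j ∈ s then w j else 0, fun j => by by_cases hj : j ∈ s <;> simp [hj, h0 _], ?_, ?_⟩
    · simp only []
      rw [Finset.sum_ite_mem]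
      simpa using h1
    · rw [← hx, Finset.affineCombination_eq_linear_combination s W w h1]
      simp only [ite_smul, zero_smul]
      rw [Finset.sum_ite_mem]
      simp
  · rintro ⟨lam, h0, h1, rfl⟩
    have := Finset.centerMass_mem_convexHull (Finset.univ (α := Fin k)) (w := lam)
      (fun j _ => h0 j) (by rw [h1]; norm_num) (z := W) (fun j _ => Set.mem_range_self j)
    rwa [Finset.centerMass, h1, inv_one, one_smul] at this

lemma nxt_val {k : ℕ} (i : Fin k) : (nxt i).val = if i.val + 1 = k then 0 else i.val + 1 := by
  have hi := i.isLt
  simp only [nxt]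
  split
  · simp [*]
  · have : i.val + 1 < k := by omega
    exact Nat.mod_eq_of_lt this

def prv {k : ℕ} (i : Fin k) : Fin k :=
  ⟨(i.val + k - 1) % k, Nat.mod_lt _ (Nat.zero_lt_of_lt i.isLt)⟩

lemma prv_val {k : ℕ} (i : Fin k) : (prv i).val = if i.val = 0 then k - 1 else i.val - 1 := by
  have hi := i.isLt
  simp only [prv]
  split
  · rename_i h
    rw [h]
    simp only [Nat.zero_add]
    exact Nat.mod_eq_of_lt (by omega)
  · rename_i h
    have h2 : i.val + k - 1 = (i.val - 1) + 1 * k := by omega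
    rw [h2, Nat.add_mul_mod_self_right]
    exact Nat.mod_eq_of_lt (by omega)

lemma nxt_prv {k : ℕ} (i : Fin k) : nxt (prv i) = i := by
  have hi := i.isLt
  apply Fin.ext
  rw [nxt_val, prv_val]
  split <;> split <;> omega

lemma dot2_self_pos {nv : ℝ × ℝ} (h : nv ≠ 0) : 0 < dot2 nv nv := by
  have h' : nv.1 ≠ 0 ∨ nv.2 ≠ 0 := by
    by_contra hc; push_neg at hc; exact h (Prod.ext hc.1 hc.2)
  have h1 : dot2 nv nv = nv.1 * nv.1 + nv.2 * nv.2 := rfl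
  rcases h' with h' | h'
  · nlinarith [mul_self_pos.mpr h', mul_self_nonneg nv.2]
  · nlinarith [mul_self_pos.mpr h', mul_self_nonneg nv.1]

lemma dot2_add (nv a b : ℝ × ℝ) : dot2 nv (a + b) = dot2 nv a + dot2 nv b := by
  simp [dot2]; ring

lemma dot2_smul (nv : ℝ × ℝ) (c : ℝ) (a : ℝ × ℝ) : dot2 nv (c • a) = c * dot2 nv a := by
  simp [dot2, Prod.smul_fst, Prod.smul_snd]; ring

lemma dot2_smul2 (nv u v : ℝ × ℝ) (s t : ℝ) :
    dot2 nv (s • u + t • v) = s * dot2 nv u + t * dot2 nv v := by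
  simp [dot2, Prod.smul_fst, Prod.smul_snd]; ring

lemma nxt_ne {k : ℕ} (hk : 2 ≤ k) (i : Fin k) : nxt i ≠ i := by
  have hi := i.isLt
  intro hc
  have := congrArg Fin.val hc
  rw [nxt_val] at this
  split at this <;> omega

lemma prv_ne {k : ℕ} (hk : 2 ≤ k) (i : Fin k) : prv i ≠ i := by
  have hi := i.isLt
  intro hc
  have := congrArg Fin.val hc
  rw [prv_val] at this
  split at this <;> omega

lemma nxt_ne_prv {k : ℕ} (hk : 3 ≤ k) (i : Fin k) : nxt i ≠ prv i := by
  have hi := i.isLt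
  intro hc
  have := congrArg Fin.val hc
  rw [prv_val, nxt_val] at this
  split at this <;> split at this <;> omega

section Main

variable {k : ℕ} (W : Fin k → ℝ × ℝ)

theorem oneside_main (hk : 3 ≤ k) (hS : StrictlyToOneSide W) :
    IsConvexPolygon W ∧ QuasiStrict W := by
  classical
  choose nv h0 hperp hpos' using hS
  have hpos : ∀ i j, j ≠ i → j ≠ nxt i → 0 < dot2 (nv i) (W j - W i) := by
    intro i j hj1 hj2
    exact hpos' i (W j) ⟨j, hj1, hj2, rfl⟩
  set K := convexHull ℝ (Set.range W) with hKdef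
  have hKconv : Convex ℝ K := convex_convexHull ℝ _
  have hKclosed : IsClosed K := (Set.finite_range W).isCompact_convexHull ℝ |>.isClosed
  -- adjacent vertices are distinct
  have hadj : ∀ i, W i ≠ W (nxt i) := by
    intro i hc
    have h1 : dot2 (nv (prv i)) (W i - W (prv i)) = 0 := by
      have := hperp (prv i); rwa [nxt_prv] at this
    have h2 : 0 < dot2 (nv (prv i)) (W (nxt i) - W (prv i)) := by
      refine hpos (prv i) (nxt i) (nxt_ne_prv hk i) ?_
      rw [nxt_prv]; exact nxt_ne (by omega) i
    rw [← hc, h1] at h2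
    exact lt_irrefl 0 h2
  -- the edge functionals are nonnegative on K
  have hfnonneg : ∀ i, ∀ x ∈ K, 0 ≤ dot2 (nv i) (x - W i) := by
    intro i x hx
    rw [mem_hull_iff] at hx
    obtain ⟨lam, hl0, hl1, rfl⟩ := hx
    rw [dot2_combo _ _ _ _ hl1]
    refine Finset.sum_nonneg fun j _ => ?_
    rcases eq_or_ne j i with rfl | hji
    · simp [dot2]
    rcases eq_or_ne j (nxt i) with rfl | hjn
    · rw [hperp]; simp
    · exact mul_nonneg (hl0 j) (le_of_lt (hpos i j hji hjn))
  -- points of K on an edge line lie on the edge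
  have hC1 : ∀ i x, x ∈ K → dot2 (nv i) (x - W i) = 0 → x ∈ segment ℝ (W i) (W (nxt i)) := by
    intro i x hx hx0
    rw [mem_hull_iff] at hx
    obtain ⟨lam, hl0, hl1, rfl⟩ := hx
    rw [dot2_combo _ _ _ _ hl1] at hx0
    have hterm : ∀ j ∈ Finset.univ, 0 ≤ lam j * dot2 (nv i) (W j - W i) := by
      intro j _
      rcases eq_or_ne j i with rfl | hji
      · simp [dot2]
      rcases eq_or_ne j (nxt i) with rfl | hjn
      · rw [hperp]; simp
      · exact mul_nonneg (hl0 j) (le_of_lt (hpos i j hji hjn))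
    have hzero := (Finset.sum_eq_zero_iff_of_nonneg hterm).mp hx0
    have hvanish : ∀ j, j ≠ i → j ≠ nxt i → lam j = 0 := by
      intro j hji hjn
      have := hzero j (Finset.mem_univ j)
      rcases mul_eq_zero.mp this with h | h
      · exact h
      · exact absurd h (ne_of_gt (hpos i j hji hjn))
    have hii : i ≠ nxt i := (nxt_ne (by omega) i).symm
    have hsum2 : lam i + lam (nxt i) = 1 := by
      have e1 : ∑ j ∈ ({i, nxt i} : Finset (Fin k)), lam j = ∑ j, lam j :=
        Finset.sum_subset (Finset.subset_univ _) (fun j _ hj => by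
          simp only [Finset.mem_insert, Finset.mem_singleton, not_or] at hj
          exact hvanish j hj.1 hj.2)
      rw [Finset.sum_pair hii] at e1
      rw [e1, hl1]
    have hvec : ∑ j, lam j • W j = lam i • W i + lam (nxt i) • W (nxt i) := by
      have e1 : ∑ j ∈ ({i, nxt i} : Finset (Fin k)), lam j • W j = ∑ j, lam j • W j :=
        Finset.sum_subset (Finset.subset_univ _) (fun j _ hj => by
          simp only [Finset.mem_insert, Finset.mem_singleton, not_or] at hj
          rw [hvanish j hj.1 hj.2, zero_smul])
      rw [Finset.sum_pair hii] at e1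
      rw [← e1]
    exact ⟨lam i, lam (nxt i), hl0 i, hl0 (nxt i), hsum2, hvec.symm⟩
  -- intersection of the open half-planes is inside K
  have hC2 : ∀ y, (∀ i, 0 < dot2 (nv i) (y - W i)) → y ∈ K := by
    intro y hy
    by_contra hyK
    obtain ⟨g, u, hgK, hgy⟩ := geometric_hahn_banach_closed_point hKconv hKclosed hyK
    have : Nonempty (Fin k) := ⟨⟨0, by omega⟩⟩
    obtain ⟨p, hp⟩ := Finite.exists_max (fun j => g (W j))
    have hperp1 : dot2 (nv (prv p)) (W p - W (prv p)) = 0 := by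
      have := hperp (prv p); rwa [nxt_prv] at this
    have hpos1 : 0 < dot2 (nv (prv p)) (W (nxt p) - W (prv p)) := by
      refine hpos (prv p) (nxt p) (nxt_ne_prv hk p) ?_
      rw [nxt_prv]; exact nxt_ne (by omega) p
    have hABne : W (prv p) ≠ W p := by
      have := hadj (prv p); rwa [nxt_prv] at this
    have hnc : ¬ Collinear ℝ ({W (prv p), W p, W (nxt p)} : Set (ℝ × ℝ)) :=
      not_collinear_of_strict hABne hperp1 hpos1
    have hcr : cross (W p - W (prv p)) (W (nxt p) - W (prv p)) ≠ 0 := by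
      intro hc; exact hnc (collinear_iff_cross.mpr hc)
    have hcr2 : cross (W (prv p) - W p) (W (nxt p) - W p) ≠ 0 := by
      intro hc
      apply hcr
      have : cross (W p - W (prv p)) (W (nxt p) - W (prv p))
          = - cross (W (prv p) - W p) (W (nxt p) - W p) := by
        simp [cross]; ring
      rw [this, hc, neg_zero]
    obtain ⟨s, t, hst⟩ := exists_coords hcr2 (y - W p)
    -- s > 0
    have hs : 0 < s := by
      have h1 : 0 < dot2 (nv p) (y - W p) := hy p
      rw [hst, dot2_smul2] at h1
      have h2 : dot2 (nv p) (W (nxt p) - W p) = 0 := hperp p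
      have h3 : 0 < dot2 (nv p) (W (prv p) - W p) :=
        hpos p (prv p) (prv_ne (by omega) p) (fun hc => (nxt_ne_prv hk p) hc.symm)
      rw [h2, mul_zero, add_zero] at h1
      by_contra hns
      push_neg at hns
      nlinarith [mul_nonneg (neg_nonneg.mpr hns) (le_of_lt h3)]
    -- t > 0
    have ht : 0 < t := by
      have h4 : 0 < dot2 (nv (prv p)) (y - W (prv p)) := hy (prv p)
      have h5 : y - W (prv p) = (y - W p) + (W p - W (prv p)) := by abel
      rw [h5, dot2_add, hst, dot2_smul2, hperp1] at h4
      have h6 : dot2 (nv (prv p)) (W (prv p) - W p) = 0 := by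
        have : W (prv p) - W p = -(W p - W (prv p)) := by abel
        rw [this, show (-(W p - W (prv p))) = (-1 : ℝ) • (W p - W (prv p)) by
          rw [neg_one_smul], dot2_smul, hperp1, mul_zero]
      have h7 : 0 < dot2 (nv (prv p)) (W (nxt p) - W p) := by
        have e : W (nxt p) - W p = (W (nxt p) - W (prv p)) - (W p - W (prv p)) := by abel
        rw [e, dot2_sub, hperp1, sub_zero]
        exact hpos1
      rw [h6, mul_zero, zero_add, add_zero] at h4
      by_contra hns
      push_neg at hns
      nlinarith [mul_nonneg (neg_nonneg.mpr hns) (le_of_lt h7)]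
    -- contradiction with maximality of g at p
    have hyW : y = W p + (s • (W (prv p) - W p) + t • (W (nxt p) - W p)) := by
      rw [← hst]; abel
    have hgy2 : g y = g (W p) + (s * (g (W (prv p)) - g (W p)) + t * (g (W (nxt p)) - g (W p))) := by
      rw [hyW]
      rw [map_add, map_add, map_smul, map_smul, map_sub, map_sub]
      simp [smul_eq_mul]
    have hWpK : W p ∈ K := subset_convexHull ℝ _ (Set.mem_range_self p)
    have h8 : g (W p) < u := hgK _ hWpK
    have h9 : g (W (prv p)) - g (W p) ≤ 0 := by have := hp (prv p); simpa using this
    have h10 : g (W (nxt p)) - g (W p) ≤ 0 := by have := hp (nxt p); simpa using this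
    nlinarith [mul_nonpos_of_nonneg_of_nonpos (le_of_lt hs) h9,
      mul_nonpos_of_nonneg_of_nonpos (le_of_lt ht) h10]
  -- continuity of the edge functionals
  have hcont : ∀ i, Continuous fun x : ℝ × ℝ => dot2 (nv i) (x - W i) := by
    intro i
    simp only [dot2]
    fun_prop
  -- edges are inside K
  have hedgeK : ∀ i, segment ℝ (W i) (W (nxt i)) ⊆ K := fun i =>
    hKconv.segment_subset (subset_convexHull ℝ _ (Set.mem_range_self i))
      (subset_convexHull ℝ _ (Set.mem_range_self (nxt i)))
  -- the i-th functional vanishes on the i-th edge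
  have hedge0 : ∀ i x, x ∈ segment ℝ (W i) (W (nxt i)) → dot2 (nv i) (x - W i) = 0 := by
    rintro i x ⟨a, b, ha, hb, hab, rfl⟩
    have e : a • W i + b • W (nxt i) - W i = b • (W (nxt i) - W i) := by
      rw [show a = 1 - b by linarith, sub_smul, one_smul, smul_sub]
      abel
    rw [e, dot2_smul, hperp i, mul_zero]
  -- edge points are not interior to K
  have hedgenotint : ∀ i x, x ∈ segment ℝ (W i) (W (nxt i)) → x ∉ interior K := by
    intro i x hxseg hxint
    rw [mem_interior_iff_mem_nhds] at hxint
    obtain ⟨ε, hε, hball⟩ := Metric.mem_nhds_iff.mp hxint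
    have hnv : 0 < ‖nv i‖ := norm_pos_iff.mpr (h0 i)
    set c := ε / (2 * ‖nv i‖) with hcdef
    have hc : 0 < c := by positivity
    have hzK : x - c • nv i ∈ K := by
      apply hball
      simp only [Metric.mem_ball, dist_eq_norm]
      have e : x - c • nv i - x = -(c • nv i) := by abel
      rw [e, norm_neg, norm_smul, Real.norm_eq_abs, abs_of_pos hc, hcdef]
      rw [div_mul_eq_mul_div]
      rw [div_lt_iff₀ (by positivity)]
      nlinarith
    have hnn := hfnonneg i _ hzK
    have e2 : x - c • nv i - W i = (x - W i) - c • nv i := by abel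
    rw [e2, dot2_sub, dot2_smul, hedge0 i x hxseg, zero_sub] at hnn
    nlinarith [dot2_self_pos (h0 i), hc]
  -- conclusion
  constructor
  · apply Set.Subset.antisymm
    · intro x hx
      rw [Set.mem_iUnion] at hx
      obtain ⟨i, hi⟩ := hx
      rw [hKclosed.frontier_eq]
      exact ⟨hedgeK i hi, hedgenotint i x hi⟩
    · intro x hx
      rw [hKclosed.frontier_eq] at hx
      obtain ⟨hxK, hxint⟩ := hx
      by_cases hzero : ∃ i, dot2 (nv i) (x - W i) = 0
      · obtain ⟨i, hi⟩ := hzero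
        exact Set.mem_iUnion.mpr ⟨i, hC1 i x hxK hi⟩
      · push_neg at hzero
        exfalso
        apply hxint
        have hxU : ∀ i, 0 < dot2 (nv i) (x - W i) := fun i =>
          lt_of_le_of_ne (hfnonneg i x hxK) (Ne.symm (hzero i))
        have hUopen : IsOpen {y : ℝ × ℝ | ∀ i, 0 < dot2 (nv i) (y - W i)} := by
          have e : {y : ℝ × ℝ | ∀ i, 0 < dot2 (nv i) (y - W i)}
              = ⋂ i, {y | 0 < dot2 (nv i) (y - W i)} := by ext; simp
          rw [e]
          exact isOpen_iInter_of_finite fun i => isOpen_lt continuous_const (hcont i)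
        exact interior_maximal (fun y hy => hC2 y hy) hUopen hxU
  · intro i j hj1 hj2
    exact not_collinear_of_strict (hadj i) (hperp i) (hpos i j hj1 hj2)


/-- Adjacent vertices of a strictly-one-sided polygon are distinct. -/
lemma adj_ne {k : ℕ} {W : Fin k → ℝ × ℝ} (hk : 3 ≤ k) (hS : StrictlyToOneSide W) (i : Fin k) :
    W i ≠ W (nxt i) := by
  obtain ⟨nv, h0, hperp, hpos⟩ := hS (prv i)
  rw [nxt_prv] at hperp
  intro hc
  have h2 : 0 < dot2 nv (W (nxt i) - W (prv i)) := by
    refine hpos _ ⟨nxt i, nxt_ne_prv hk i, ?_, rfl⟩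
    rw [nxt_prv]
    exact nxt_ne (by omega) i
  rw [← hc, hperp] at h2
  exact lt_irrefl 0 h2

/-- The diagonal avoiding vertex `m` has all remaining vertices strictly to one side. -/
theorem diag_strict {k : ℕ} {V : Fin k → ℝ × ℝ} (hk : 3 ≤ k) (hS : StrictlyToOneSide V)
    (m : Fin k) :
    StrictSide (V (prv m)) (V (nxt m))
      {P | ∃ j : Fin k, j ≠ prv m ∧ j ≠ m ∧ j ≠ nxt m ∧ P = V j} := by
  classical
  choose nv h0 hperp hpos' using hS
  have hpos : ∀ i j, j ≠ i → j ≠ nxt i → 0 < dot2 (nv i) (V j - V i) := by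
    intro i j hj1 hj2
    exact hpos' i (V j) ⟨j, hj1, hj2, rfl⟩
  set p := prv m with hpdef
  have hnp : nxt p = m := nxt_prv m
  have hperp_p : dot2 (nv p) (V m - V p) = 0 := by
    have := hperp p; rwa [hnp] at this
  have hpos_p_nxtm : 0 < dot2 (nv p) (V (nxt m) - V p) := by
    refine hpos p (nxt m) (nxt_ne_prv hk m) ?_
    rw [hnp]; exact nxt_ne (by omega) m
  have hpm : V p ≠ V m := by
    have := adj_ne hk (fun i => ⟨nv i, h0 i, hperp i, hpos' i⟩) p
    rwa [hnp] at this
  have hnoncol : ¬ Collinear ℝ ({V p, V m, V (nxt m)} : Set (ℝ × ℝ)) :=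
    not_collinear_of_strict hpm hperp_p hpos_p_nxtm
  -- the diagonal direction and a normal to it
  set w : ℝ × ℝ := V (nxt m) - V p with hwdef
  have hwne : w ≠ 0 := by
    intro hc
    rw [hc] at hpos_p_nxtm
    simp [dot2] at hpos_p_nxtm
  set nvd0 : ℝ × ℝ := (-w.2, w.1) with hnvd0
  have hnvd0w : dot2 nvd0 w = 0 := by simp [dot2, hnvd0]; ring
  have hdc : ∀ z : ℝ × ℝ, dot2 nvd0 z = cross w z := by
    intro z; simp [cross, hnvd0, dot2]; ring
  have hq0 : dot2 nvd0 (V m - V p) ≠ 0 := by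
    intro hc
    apply hnoncol
    rw [hdc] at hc
    have h2 : Collinear ℝ ({V (nxt m), V m, V p} : Set (ℝ × ℝ)) := by
      apply collinear_iff_cross.mpr
      rw [hwdef] at hc
      simp only [cross, Prod.fst_sub, Prod.snd_sub] at hc ⊢
      linear_combination hc
    have hsets : ({V (nxt m), V m, V p} : Set (ℝ × ℝ)) = {V p, V m, V (nxt m)} := by
      ext z; simp only [Set.mem_insert_iff, Set.mem_singleton_iff]; tauto
    rwa [hsets] at h2
  have hnvd0ne : nvd0 ≠ 0 := by
    intro hc
    apply hwne
    have h1 : nvd0.1 = 0 := by rw [hc]; rfl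
    have h2 : nvd0.2 = 0 := by rw [hc]; rfl
    simp only [hnvd0] at h1 h2
    exact Prod.ext (by simpa using h2) (by simpa using h1)
  obtain ⟨nvd, hnvdne, hnvdw, hq⟩ :
      ∃ nvd : ℝ × ℝ, nvd ≠ 0 ∧ dot2 nvd w = 0 ∧ dot2 nvd (V m - V p) < 0 := by
    rcases lt_or_gt_of_ne hq0 with hqs | hqs
    · exact ⟨nvd0, hnvd0ne, hnvd0w, hqs⟩
    · refine ⟨-nvd0, neg_ne_zero.mpr hnvd0ne, ?_, ?_⟩
      · rw [show -nvd0 = ((-1 : ℝ) • nvd0.1, (-1 : ℝ) • nvd0.2) by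
          apply Prod.ext <;> simp]
        simp only [dot2] at hnvd0w ⊢
        simp only [smul_eq_mul]
        nlinarith [hnvd0w]
      · simp only [dot2] at hqs ⊢
        simp only [Prod.fst_neg, Prod.snd_neg]
        nlinarith [hqs]
  refine ⟨nvd, hnvdne, hnvdw, ?_⟩
  rintro A ⟨j, hjp, hjm, hjn, rfl⟩
  by_contra hd
  push_neg at hd
  -- barycentric-style coordinates with respect to the triangle (V p, V m, V (nxt m))
  set u : ℝ × ℝ := V p - V m with hudef
  set v : ℝ × ℝ := V (nxt m) - V m with hvdef
  have hcruv : cross u v ≠ 0 := by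
    intro hc
    apply hnoncol
    have h2 : Collinear ℝ ({V m, V p, V (nxt m)} : Set (ℝ × ℝ)) := collinear_iff_cross.mpr hc
    have hsets : ({V m, V p, V (nxt m)} : Set (ℝ × ℝ)) = {V p, V m, V (nxt m)} := by
      ext z; simp only [Set.mem_insert_iff, Set.mem_singleton_iff]; tauto
    rwa [hsets] at h2
  obtain ⟨s, t, hst⟩ := exists_coords hcruv (V j - V m)
  have hpne_m : p ≠ m := prv_ne (by omega) m
  have hpne_nxtm : p ≠ nxt m := fun hc => nxt_ne_prv hk m hc.symm
  have hA : 0 < dot2 (nv m) u := hpos m p hpne_m hpne_nxtm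
  have hBv : dot2 (nv m) v = 0 := hperp m
  have hs : 0 < s := by
    have h1 : 0 < dot2 (nv m) (V j - V m) := hpos m j hjm hjn
    rw [hst, dot2_smul2, hBv, mul_zero, add_zero] at h1
    by_contra hns
    push_neg at hns
    nlinarith [mul_nonneg (neg_nonneg.mpr hns) (le_of_lt hA)]
  have hpu : dot2 (nv p) u = 0 := by
    rw [hudef, show V p - V m = -(V m - V p) by abel,
      show -(V m - V p) = (-1 : ℝ) • (V m - V p) by rw [neg_one_smul], dot2_smul, hperp_p,
      mul_zero]
  have hpv : 0 < dot2 (nv p) v := by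
    have e : v = w - (V m - V p) := by rw [hvdef, hwdef]; abel
    rw [e, dot2_sub, hperp_p, sub_zero]
    exact hpos_p_nxtm
  have ht : 0 < t := by
    have hjm' : j ≠ nxt p := by rw [hnp]; exact hjm
    have h1 : 0 < dot2 (nv p) (V j - V p) := hpos p j hjp hjm'
    have e : V j - V p = (s • u + t • v) + (V m - V p) := by rw [← hst]; abel
    rw [e, dot2_add, dot2_smul2, hpu, hperp_p, mul_zero, zero_add, add_zero] at h1
    by_contra hns
    push_neg at hns
    nlinarith [mul_nonneg (neg_nonneg.mpr hns) (le_of_lt hpv)]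
  have h1st : 0 ≤ 1 - s - t := by
    have e : V j - V p = (s • u + t • v) + (V m - V p) := by rw [← hst]; abel
    have hdu : dot2 nvd u = -(dot2 nvd (V m - V p)) := by
      rw [hudef, show V p - V m = (-1 : ℝ) • (V m - V p) by rw [neg_one_smul]; abel, dot2_smul]
      ring
    have hdv : dot2 nvd v = -(dot2 nvd (V m - V p)) := by
      have e2 : v = w - (V m - V p) := by rw [hvdef, hwdef]; abel
      rw [e2, dot2_sub, hnvdw, zero_sub]
    rw [e, dot2_add, dot2_smul2, hdu, hdv] at hd
    set q := dot2 nvd (V m - V p)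
    -- hd : s * (-q) + t * (-q) + q ≤ 0, with q < 0
    by_contra hns
    push_neg at hns
    nlinarith [mul_pos (neg_pos.mpr hq) (show (0:ℝ) < s + t - 1 by linarith)]
  -- the edge ending at j separates
  set r := prv j with hrdef
  have hr : nxt r = j := nxt_prv j
  have hperp_r : dot2 (nv r) (V j - V r) = 0 := by
    have := hperp r; rwa [hr] at this
  have hmr : m ≠ r := by
    intro hc
    apply hjn
    rw [← hr, ← hc]
  have hA0 : 0 < dot2 (nv r) (V m - V r) := by
    refine hpos r m hmr ?_
    rw [hr]; exact Ne.symm hjm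
  have hpr : p ≠ r := by
    intro hc
    apply hjm
    have : nxt p = nxt r := by rw [hc]
    rw [hnp, hr] at this
    exact this.symm
  have hA1 : 0 < dot2 (nv r) (V p - V r) := by
    refine hpos r p hpr ?_
    rw [hr]; exact Ne.symm hjp
  have hA2 : 0 ≤ dot2 (nv r) (V (nxt m) - V r) := by
    rcases eq_or_ne (nxt m) r with hc | hc
    · rw [← hc, sub_self]
      simp [dot2]
    · refine le_of_lt (hpos r (nxt m) hc ?_)
      rw [hr]; exact Ne.symm hjn
  have hru : dot2 (nv r) u = dot2 (nv r) (V p - V r) - dot2 (nv r) (V m - V r) := by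
    rw [← dot2_sub]
    congr 1
    rw [hudef]; abel
  have hrv : dot2 (nv r) v = dot2 (nv r) (V (nxt m) - V r) - dot2 (nv r) (V m - V r) := by
    rw [← dot2_sub]
    congr 1
    rw [hvdef]; abel
  have hkey : dot2 (nv r) (V j - V r)
      = s * dot2 (nv r) u + t * dot2 (nv r) v + dot2 (nv r) (V m - V r) := by
    have e : V j - V r = (s • u + t • v) + (V m - V r) := by
      rw [show V j - V r = (V j - V m) + (V m - V r) by abel, hst]
    rw [e, dot2_add, dot2_smul2]
  rw [hperp_r] at hkey
  rw [hru, hrv] at hkey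
  nlinarith [mul_pos hs hA1, mul_nonneg (le_of_lt ht) hA2,
    mul_nonneg h1st (le_of_lt hA0)]

/-- The convex hull of a collinear set has empty interior. -/
lemma interior_hull_empty {s : Set (ℝ × ℝ)} (hcol : Collinear ℝ s) :
    interior (convexHull ℝ s) = ∅ := by
  by_contra h
  obtain ⟨x, hx⟩ := Set.nonempty_iff_ne_empty.mpr h
  have htop : affineSpan ℝ s = ⊤ := by
    have := (convex_convexHull ℝ s).interior_nonempty_iff_affineSpan_eq_top.mp ⟨x, hx⟩
    rwa [affineSpan_convexHull] at this
  have hvs : vectorSpan ℝ s = ⊤ := by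
    rw [← direction_affineSpan, htop]
    exact AffineSubspace.direction_top ℝ _ _
  have hle := (collinear_iff_rank_le_one ℝ s).mp hcol
  rw [hvs, rank_top, rank_prod', Module.rank_self] at hle
  norm_num at hle

/-- The convex hull of a set containing three non-collinear points has nonempty interior. -/
lemma interior_hull_nonempty {s : Set (ℝ × ℝ)} {A B C : ℝ × ℝ}
    (hA : A ∈ s) (hB : B ∈ s) (hC : C ∈ s)
    (h : ¬ Collinear ℝ ({A, B, C} : Set (ℝ × ℝ))) :
    (interior (convexHull ℝ s)).Nonempty := by
  rw [(convex_convexHull ℝ s).interior_nonempty_iff_affineSpan_eq_top, affineSpan_convexHull]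
  by_contra hne
  apply h
  have hsn : ((affineSpan ℝ s : AffineSubspace ℝ (ℝ × ℝ)) : Set (ℝ × ℝ)).Nonempty :=
    ⟨A, subset_affineSpan ℝ s hA⟩
  have hdir : (affineSpan ℝ s).direction ≠ ⊤ := by
    intro hc
    exact hne ((AffineSubspace.direction_eq_top_iff_of_nonempty hsn).mp hc)
  rw [direction_affineSpan] at hdir
  have hlt : vectorSpan ℝ s < ⊤ := lt_top_iff_ne_top.mpr hdir
  have hfr := Submodule.finrank_lt (K := ℝ) (V := ℝ × ℝ) hlt.ne
  have h2 : Module.finrank ℝ (ℝ × ℝ) = 2 := by simp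
  rw [h2] at hfr
  have hcol : Collinear ℝ s := collinear_iff_finrank_le_one.mpr (by omega)
  exact hcol.subset (by
    intro z hz
    simp only [Set.mem_insert_iff, Set.mem_singleton_iff] at hz
    rcases hz with rfl | rfl | rfl <;> assumption)

lemma quasi_small {k : ℕ} (hk : k ≤ 2) (W : Fin k → ℝ × ℝ) : QuasiStrict W := by
  intro i j hj1 hj2
  exfalso
  have h1 : j.val ≠ i.val := fun hc => hj1 (Fin.ext hc)
  have h2 : j.val ≠ (nxt i).val := fun hc => hj2 (Fin.ext hc)
  rw [nxt_val] at h2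
  have := i.isLt
  have := j.isLt
  split at h2 <;> omega

lemma conv_small {k : ℕ} (hk : k ≤ 2) (W : Fin k → ℝ × ℝ) : IsConvexPolygon W := by
  have hcol : Collinear ℝ (Set.range W) := by
    interval_cases k
    · rw [Set.range_eq_empty W]
      exact Collinear.subset (Set.empty_subset _) (collinear_pair ℝ (0 : ℝ × ℝ) 0)
    · have : Set.range W = {W 0} := by
        ext z; constructor
        · rintro ⟨i, rfl⟩; simp [Subsingleton.elim i 0]
        · rintro rfl; exact ⟨0, rfl⟩
      rw [this]; exact collinear_singleton ℝ _
    · have : Set.range W = {W 0, W 1} := by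
        ext z; constructor
        · rintro ⟨i, rfl⟩
          fin_cases i <;> simp
        · rintro (rfl | rfl)
          exacts [⟨0, rfl⟩, ⟨1, rfl⟩]
      rw [this]; exact collinear_pair ℝ _ _
  have hKclosed : IsClosed (convexHull ℝ (Set.range W)) :=
    (Set.finite_range W).isCompact_convexHull ℝ |>.isClosed
  rw [IsConvexPolygon, hKclosed.frontier_eq, interior_hull_empty hcol, Set.diff_empty]
  interval_cases k
  · simp
  · have hnxt : ∀ i : Fin 1, nxt i = i := fun i => Subsingleton.elim _ _
    have hr : Set.range W = {W 0} := by
      ext z; constructor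
      · rintro ⟨i, rfl⟩; simp [Subsingleton.elim i 0]
      · rintro rfl; exact ⟨0, rfl⟩
    rw [hr, convexHull_singleton]
    apply Set.Subset.antisymm
    · intro z hz
      rw [Set.mem_iUnion] at hz
      obtain ⟨i, hi⟩ := hz
      rw [hnxt i, segment_same] at hi
      simpa [Subsingleton.elim i 0] using hi
    · rintro z rfl
      exact Set.mem_iUnion.mpr ⟨0, by rw [hnxt 0, segment_same]; rfl⟩
  · have hr : Set.range W = {W 0, W 1} := by
      ext z; constructor
      · rintro ⟨i, rfl⟩
        fin_cases i <;> simp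
      · rintro (rfl | rfl)
        exacts [⟨0, rfl⟩, ⟨1, rfl⟩]
    have h01 : nxt (0 : Fin 2) = 1 := by apply Fin.ext; simp [nxt_val]
    have h10 : nxt (1 : Fin 2) = 0 := by apply Fin.ext; simp [nxt_val]
    rw [hr, convexHull_pair]
    apply Set.Subset.antisymm
    · intro z hz
      rw [Set.mem_iUnion] at hz
      obtain ⟨i, hi⟩ := hz
      have hi2 : i = 0 ∨ i = 1 := by omega
      rcases hi2 with rfl | rfl
      · rwa [h01] at hi
      · rw [h10] at hi
        rwa [segment_symm] at hi
    · intro z hz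
      exact Set.mem_iUnion.mpr ⟨0, by rwa [h01]⟩

/-- Linear functionals on `ℝ × ℝ` are given by `dot2`. -/
lemma clm_eq_dot2 (g : (ℝ × ℝ) →L[ℝ] ℝ) (y : ℝ × ℝ) :
    g y = dot2 (g (1, 0), g (0, 1)) y := by
  have hy : y = y.1 • ((1 : ℝ), (0 : ℝ)) + y.2 • ((0 : ℝ), (1 : ℝ)) := by
    apply Prod.ext <;> simp
  calc g y = g (y.1 • ((1 : ℝ), (0 : ℝ)) + y.2 • ((0 : ℝ), (1 : ℝ))) := by rw [← hy]
    _ = y.1 * g (1, 0) + y.2 * g (0, 1) := by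
        rw [map_add, map_smul, map_smul]; simp [smul_eq_mul]
    _ = dot2 (g (1, 0), g (0, 1)) y := by simp [dot2]; ring

theorem convex_to_onesided {k : ℕ} {W : Fin k → ℝ × ℝ} (hk : 3 ≤ k)
    (hpoly : IsConvexPolygon W) (hquasi : QuasiStrict W) : StrictlyToOneSide W := by
  intro i
  set K := convexHull ℝ (Set.range W) with hKdef
  have hKconv : Convex ℝ K := convex_convexHull ℝ _
  have hKclosed : IsClosed K := (Set.finite_range W).isCompact_convexHull ℝ |>.isClosed
  -- a non-collinear triple of vertices
  have hnn : nxt (nxt i) ≠ i ∧ nxt (nxt i) ≠ nxt i := by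
    constructor <;>
    · intro hc
      have h1 := congrArg Fin.val hc
      rw [nxt_val] at h1
      rw [nxt_val] at h1  -- second layer
      try rw [nxt_val] at h1
      have h2 := i.isLt
      split at h1 <;> split at h1 <;> omega
  have hncol := hquasi i (nxt (nxt i)) hnn.1 hnn.2
  have hint : (interior K).Nonempty :=
    interior_hull_nonempty (Set.mem_range_self i) (Set.mem_range_self (nxt i))
      (Set.mem_range_self (nxt (nxt i))) hncol
  obtain ⟨z, hz⟩ := hint
  -- the midpoint of the edge is on the frontier
  set x := midpoint ℝ (W i) (W (nxt i)) with hxdef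
  have hxseg : x ∈ segment ℝ (W i) (W (nxt i)) := midpoint_mem_segment _ _
  have hxfront : x ∈ frontier K := by
    rw [← hpoly]
    exact Set.mem_iUnion.mpr ⟨i, hxseg⟩
  have hxint : x ∉ interior K := by
    rw [hKclosed.frontier_eq] at hxfront
    exact hxfront.2
  obtain ⟨g, hg⟩ := geometric_hahn_banach_open_point (hKconv.interior) isOpen_interior hxint
  -- g is at most g x on all of K
  have hgK : ∀ a ∈ K, g a ≤ g x := by
    intro a ha
    by_contra hc
    push_neg at hc
    have hgz : g z < g x := hg z hz
    set t : ℝ := min ((g a - g x) / (g a - g z)) (1/2) with htdef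
    have hagz : 0 < g a - g z := by linarith
    have ht0 : 0 < t := by
      apply lt_min
      · apply div_pos <;> linarith
      · norm_num
    have ht1 : t < 1 := lt_of_le_of_lt (min_le_right _ _) (by norm_num)
    have hw : t • z + (1 - t) • a ∈ interior K :=
      hKconv.combo_interior_closure_mem_interior hz (subset_closure ha) ht0
        (by linarith) (by ring)
    have hgw := hg _ hw
    rw [map_add, map_smul, map_smul] at hgw
    simp only [smul_eq_mul] at hgw
    have htle : t * (g a - g z) ≤ g a - g x := by
      have h1 : t ≤ (g a - g x) / (g a - g z) := min_le_left _ _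
      exact (le_div_iff₀ hagz).mp h1
    nlinarith [hgw, htle]
  -- g takes the same value at the two edge endpoints
  have hxval : g x = (g (W i) + g (W (nxt i))) / 2 := by
    rw [hxdef, midpoint_eq_smul_add, map_smul, map_add]
    simp [smul_eq_mul, invOf_eq_inv]
    ring
  have hWiK : W i ∈ K := subset_convexHull ℝ _ (Set.mem_range_self i)
  have hWnK : W (nxt i) ∈ K := subset_convexHull ℝ _ (Set.mem_range_self (nxt i))
  have hgi : g (W i) = g x := by
    have l1 := hgK _ hWiK
    have l2 := hgK _ hWnK
    linarith [hxval]
  have hgn : g (W (nxt i)) = g x := by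
    have l1 := hgK _ hWiK
    have l2 := hgK _ hWnK
    linarith [hxval]
  -- the normal vector
  set nv : ℝ × ℝ := (-(g (1, 0)), -(g (0, 1))) with hnvdef
  have hnv : ∀ y, dot2 nv y = -(g y) := by
    intro y
    rw [clm_eq_dot2 g y, hnvdef]
    simp [dot2]
    ring
  refine ⟨nv, ?_, ?_, ?_⟩
  · intro hc
    have hg1 : g (1, 0) = 0 := by
      have := congrArg Prod.fst hc
      simp [hnvdef] at this
      exact this
    have hg2 : g (0, 1) = 0 := by
      have := congrArg Prod.snd hc
      simp [hnvdef] at this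
      exact this
    have hz0 : g z = 0 := by rw [clm_eq_dot2 g z, hg1, hg2]; simp [dot2]
    have hx0 : g x = 0 := by rw [clm_eq_dot2 g x, hg1, hg2]; simp [dot2]
    have := hg z hz
    rw [hz0, hx0] at this
    exact lt_irrefl 0 this
  · rw [hnv, map_sub, hgn, hgi]
    ring
  · rintro A ⟨j, hj1, hj2, rfl⟩
    rw [hnv, map_sub, hgi]
    have hle : g (W j) ≤ g x := hgK _ (subset_convexHull ℝ _ (Set.mem_range_self j))
    rcases lt_or_eq_of_le hle with hlt | heq
    · linarith
    exfalso
    have hncol2 := hquasi i j hj1 hj2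
    have hcr : cross (W (nxt i) - W i) (W j - W i) ≠ 0 := by
      intro hc
      exact hncol2 (collinear_iff_cross.mpr hc)
    obtain ⟨s, t, hst⟩ := exists_coords hcr (z - x)
    have hgu : g (W (nxt i) - W i) = 0 := by rw [map_sub, hgn, hgi]; ring
    have hgv : g (W j - W i) = 0 := by rw [map_sub, heq, hgi]; ring
    have : g (z - x) = 0 := by
      rw [hst, map_add, map_smul, map_smul, hgu, hgv]
      simp
    rw [map_sub] at this
    have := hg z hz
    linarith


lemma succAbove_val {n : ℕ} (m : Fin (n + 1)) (i : Fin n) :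
    (m.succAbove i).val = if i.val < m.val then i.val else i.val + 1 := by
  rw [Fin.succAbove]
  split
  · rename_i h
    rw [Fin.lt_def] at h
    simp only [Fin.coe_castSucc] at h ⊢
    rw [if_pos h]
  · rename_i h
    rw [Fin.lt_def] at h
    simp only [Fin.coe_castSucc, Fin.val_succ] at h ⊢
    rw [if_neg (by omega)]

lemma nxt_inj {k : ℕ} {a b : Fin k} (h : nxt a = nxt b) : a = b := by
  have hv := congrArg Fin.val h
  rw [nxt_val, nxt_val] at hv
  have ha := a.isLt
  have hb := b.isLt
  apply Fin.ext
  split at hv <;> split at hv <;> omega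

lemma succAbove_edge {n : ℕ} (m : Fin (n + 1)) (i : Fin n) :
    (m.succAbove (nxt i) = nxt (m.succAbove i) ∧ nxt (m.succAbove i) ≠ m)
    ∨ (nxt (m.succAbove i) = m ∧ m.succAbove (nxt i) = nxt m) := by
  have e1 := succAbove_val m i
  have e2 := succAbove_val m (nxt i)
  have e3 := nxt_val i
  have e4 := nxt_val (m.succAbove i)
  have e5 := nxt_val m
  have hi := i.isLt
  have hm := m.isLt
  have hni := (nxt i).isLt
  simp only [Fin.ext_iff, ne_eq]
  split at e1 <;> split at e2 <;> split at e3 <;> split at e4 <;> split at e5 <;> omega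

end Main
end PGaux

/-- Pinelis, Lemma 6: deleting any vertex of a quasi-strictly convex polygon
yields a quasi-strictly convex polygon. -/
theorem stmt_11 (n : ℕ) (V : Fin (n + 1) → ℝ × ℝ)
    (h : IsConvexPolygon V ∧ QuasiStrict V) (m : Fin (n + 1)) :
    IsConvexPolygon (V ∘ m.succAbove) ∧ QuasiStrict (V ∘ m.succAbove) := by
  classical
  obtain ⟨hpoly, hquasi⟩ := h
  rcases le_or_gt n 2 with hn | hn
  · exact ⟨PGaux.conv_small hn _, PGaux.quasi_small hn _⟩
  have hn3 : 3 ≤ n := hn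
  have hS : StrictlyToOneSide V := PGaux.convex_to_onesided (by omega) hpoly hquasi
  have hSW : StrictlyToOneSide (V ∘ m.succAbove) := by
    intro i
    rcases PGaux.succAbove_edge m i with ⟨hreg, hne⟩ | ⟨hdg, hnx⟩
    · obtain ⟨nv, h0, hperp, hpos⟩ := hS (m.succAbove i)
      refine ⟨nv, h0, ?_, ?_⟩
      · show dot2 nv (V (m.succAbove (nxt i)) - V (m.succAbove i)) = 0
        rw [hreg]
        exact hperp
      · rintro A ⟨j, hj1, hj2, rfl⟩
        show 0 < dot2 nv (V (m.succAbove j) - V (m.succAbove i))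
        apply hpos
        refine ⟨m.succAbove j, ?_, ?_, rfl⟩
        · intro hc
          exact hj1 (Fin.succAbove_right_injective hc)
        · rw [← hreg]
          intro hc
          exact hj2 (Fin.succAbove_right_injective hc)
    · have hprv : PGaux.prv m = m.succAbove i := by
        apply PGaux.nxt_inj
        rw [PGaux.nxt_prv, hdg]
      have hD := PGaux.diag_strict (k := n + 1) (by omega) hS m
      rw [hprv] at hD
      obtain ⟨nv, h0, hperp, hpos⟩ := hD
      refine ⟨nv, h0, ?_, ?_⟩
      · show dot2 nv (V (m.succAbove (nxt i)) - V (m.succAbove i)) = 0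
        rw [hnx]
        exact hperp
      · rintro A ⟨j, hj1, hj2, rfl⟩
        show 0 < dot2 nv (V (m.succAbove j) - V (m.succAbove i))
        apply hpos
        refine ⟨m.succAbove j, ?_, ?_, ?_, rfl⟩
        · intro hc
          exact hj1 (Fin.succAbove_right_injective hc)
        · exact Fin.succAbove_ne m j
        · rw [← hnx]
          intro hc
          exact hj2 (Fin.succAbove_right_injective hc)
  exact PGaux.oneside_main (V ∘ m.succAbove) hn3 hSW
end

section
/- A convex polygon is strict if and only if it is quasi-strict. That is, for a polygon whose union of edges equals the boundary of the convex hull of its vertices, no three distinct-index vertices are collinear if and only if no two adjacent vertices are collinear with any third vertex. -/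
lemma aux_expand (f : (ℝ×ℝ) →L[ℝ] ℝ) (x : ℝ×ℝ) :
    f x = x.1 * f (1,0) + x.2 * f (0,1) := by
  have hx : x = x.1 • ((1:ℝ),(0:ℝ)) + x.2 • ((0:ℝ),(1:ℝ)) := by
    ext <;> simp
  conv_lhs => rw [hx]
  rw [map_add, map_smul, map_smul, smul_eq_mul, smul_eq_mul]

lemma aux_line (f : (ℝ×ℝ) →L[ℝ] ℝ) (hf : f (1,0) ≠ 0 ∨ f (0,1) ≠ 0) (c : ℝ) (x y z : ℝ×ℝ)
    (hx : f x = c) (hy : f y = c) (hz : f z = c) :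
    Collinear ℝ ({x, y, z} : Set (ℝ×ℝ)) := by
  rw [collinear_iff_of_mem (Set.mem_insert x _)]
  refine ⟨(-(f (0,1)), f (1,0)), ?_⟩
  intro p hp
  have hpc : f p = c := by
    simp only [Set.mem_insert_iff, Set.mem_singleton_iff] at hp
    rcases hp with rfl | rfl | rfl <;> assumption
  have hd : (p.1 - x.1) * f (1,0) + (p.2 - x.2) * f (0,1) = 0 := by
    have h1 := aux_expand f (p - x)
    rw [map_sub, hpc, hx, sub_self] at h1
    simp only [Prod.fst_sub, Prod.snd_sub] at h1
    linarith
  rcases hf with hα | hβ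
  · refine ⟨(p.2 - x.2) / f (1,0), ?_⟩
    simp only [Prod.ext_iff, Prod.smul_mk, vadd_eq_add, Prod.mk_add_mk, smul_eq_mul, Prod.fst_add, Prod.snd_add]
    constructor
    · field_simp
      nlinarith [hd]
    · field_simp; ring
  · refine ⟨-(p.1 - x.1) / f (0,1), ?_⟩
    simp only [Prod.ext_iff, Prod.smul_mk, vadd_eq_add, Prod.mk_add_mk, smul_eq_mul, Prod.fst_add, Prod.snd_add]
    constructor
    · field_simp; ring
    · field_simp
      nlinarith [hd]

/-- Pinelis, Lemma 7: a convex polygon is strict iff it is quasi-strict. -/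
theorem stmt_12 (n : ℕ) (V : Fin n → ℝ × ℝ) (h : IsConvexPolygon V) :
    StrictPoly V ↔ QuasiStrict V := by
  constructor
  · intro hS i j hji hjni
    have hn2 : 2 ≤ n := by
      by_contra hc
      push_neg at hc
      have hi := i.isLt
      have hj := j.isLt
      have : i.val ≠ j.val := fun hc => hji (Fin.ext hc.symm)
      omega
    have hne : i ≠ nxt i := by
      intro hc
      have h1 : i.val = (i.val + 1) % n := congrArg Fin.val hc
      have hi := i.isLt
      rcases Nat.lt_or_ge (i.val + 1) n with hlt | hge
      · rw [Nat.mod_eq_of_lt hlt] at h1; omega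
      · have he : i.val + 1 = n := by omega
        rw [he, Nat.mod_self] at h1
        omega
    exact hS i (nxt i) j hne (Ne.symm hji) (Ne.symm hjni)
  · intro hQ i j k hij hik hjk hcol
    have hn : 3 ≤ n := by
      have h1 : i.val ≠ j.val := fun hc => hij (Fin.ext hc)
      have h2 : i.val ≠ k.val := fun hc => hik (Fin.ext hc)
      have h3 : j.val ≠ k.val := fun hc => hjk (Fin.ext hc)
      have := i.isLt; have := j.isLt; have := k.isLt
      omega
    -- a third index distinct from any two given
    have third : ∀ p q : Fin n, ∃ r : Fin n, r ≠ p ∧ r ≠ q := by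
      intro p q
      obtain ⟨m, hm, hm1, hm2⟩ : ∃ m : ℕ, m < n ∧ m ≠ p.val ∧ m ≠ q.val := by
        refine ⟨if p.val ≠ 0 ∧ q.val ≠ 0 then 0 else if p.val ≠ 1 ∧ q.val ≠ 1 then 1 else 2, ?_⟩
        split_ifs <;> omega
      exact ⟨⟨m, hm⟩, Fin.ne_of_val_ne hm1, Fin.ne_of_val_ne hm2⟩
    -- distinct indices give distinct points
    have hdist : ∀ p q : Fin n, p ≠ q → V p ≠ V q := by
      intro p q hpq heq
      by_cases hq : q = nxt p
      · subst hq
        obtain ⟨r, hr1, hr2⟩ := third p (nxt p)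
        apply hQ p r hr1 hr2
        rw [← heq, Set.insert_idem]
        exact collinear_pair ℝ _ _
      · apply hQ p q (Ne.symm hpq) hq
        refine Collinear.subset ?_ (collinear_pair ℝ (V p) (V (nxt p)))
        intro x hx
        simp only [Set.mem_insert_iff, Set.mem_singleton_iff] at hx ⊢
        rcases hx with rfl | rfl | rfl
        · exact Or.inl rfl
        · exact Or.inr rfl
        · exact Or.inl heq.symm
    -- the key lemma
    have key : ∀ a b c : Fin n, a ≠ b → a ≠ c → b ≠ c →
        V b ∈ segment ℝ (V a) (V c) → False := by
      intro a b c hab hac hbc hseg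
      set K := convexHull ℝ (Set.range V) with hK
      have hKconv : Convex ℝ K := convex_convexHull ℝ _
      have hKcl : IsClosed K := (Set.finite_range V).isClosed_convexHull (𝕜 := ℝ)
      have hVK : ∀ p : Fin n, V p ∈ K := fun p => subset_convexHull ℝ _ (Set.mem_range_self p)
      have hncol : ¬ Collinear ℝ (Set.range V) := by
        intro hc
        refine hQ ⟨0, by omega⟩ ⟨2, by omega⟩ ?_ ?_ ?_
        · exact Fin.ne_of_val_ne (by show (2:ℕ) ≠ 0; omega)
        · refine Fin.ne_of_val_ne ?_
          show (2:ℕ) ≠ (0+1) % n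
          rw [Nat.mod_eq_of_lt (by omega : 0+1 < n)]
          omega
        · refine hc.subset ?_
          intro x hx
          simp only [Set.mem_insert_iff, Set.mem_singleton_iff] at hx
          rcases hx with rfl | rfl | rfl <;> exact Set.mem_range_self _
      have hint : (interior K).Nonempty := by
        rw [hK, interior_convexHull_nonempty_iff_affineSpan_eq_top]
        by_contra htop
        apply hncol
        have hd : vectorSpan ℝ (Set.range V) ≠ ⊤ := by
          rw [← direction_affineSpan]
          intro hdir
          exact htop ((AffineSubspace.direction_eq_top_iff_of_nonempty
            ⟨V a, subset_affineSpan ℝ _ (Set.mem_range_self a)⟩).mp hdir)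
        rw [collinear_iff_finrank_le_one]
        have h2 : Module.finrank ℝ (ℝ × ℝ) = 2 := by
          simp [Module.finrank_prod]
        have hlt := Submodule.finrank_lt (K := ℝ) (V := ℝ × ℝ)
          (s := vectorSpan ℝ (Set.range V)) hd
        omega
      obtain ⟨y₀, hy₀⟩ := hint
      have hVbfr : V b ∈ frontier K := by
        have hm : V b ∈ ⋃ i : Fin n, segment ℝ (V i) (V (nxt i)) :=
          Set.mem_iUnion.mpr ⟨b, left_mem_segment ℝ _ _⟩
        rw [h] at hm
        exact hm
      have hVbni : V b ∉ interior K := by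
        rw [hKcl.frontier_eq] at hVbfr
        exact hVbfr.2
      obtain ⟨f, hf⟩ := geometric_hahn_banach_open_point hKconv.interior isOpen_interior hVbni
      have hKle : ∀ x ∈ K, f x ≤ f (V b) := by
        intro x hxK
        by_contra hgt
        push_neg at hgt
        have hy0lt : f y₀ < f (V b) := hf y₀ hy₀
        have h1 : 0 < f x - f y₀ := by linarith
        set t := (f x - f (V b)) / (f x - f y₀) with ht
        have htI : t ∈ Set.Ioc (0:ℝ) 1 := by
          constructor
          · apply div_pos (by linarith) h1
          · rw [div_le_one h1]; linarith
        have hmem := hKconv.add_smul_sub_mem_interior hxK hy₀ htI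
        have hlt := hf _ hmem
        rw [map_add, map_smul, map_sub, smul_eq_mul] at hlt
        have heq : f x + t * (f y₀ - f x) = f (V b) := by
          rw [ht]; field_simp; ring
        linarith
      have hseg_eq : ∀ x y z : ℝ×ℝ, x ∈ segment ℝ y z → x ≠ y → x ≠ z →
          f y ≤ f (V b) → f z ≤ f (V b) → f x = f (V b) → f y = f (V b) ∧ f z = f (V b) := by
        intro x y z hs hxy hxz hyle hzle hxc
        obtain ⟨u, v, hu, hv, huv, hx⟩ := hs
        have hxval : u * f y + v * f z = f (V b) := by
          rw [← hxc, ← hx, map_add, map_smul, map_smul, smul_eq_mul, smul_eq_mul]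
        have hu0 : u ≠ 0 := by
          rintro rfl
          apply hxz
          rw [← hx, zero_smul, zero_add, show v = 1 by linarith, one_smul]
        have hv0 : v ≠ 0 := by
          rintro rfl
          apply hxy
          rw [← hx, zero_smul, add_zero, show u = 1 by linarith, one_smul]
        have hu' : 0 < u := hu.lt_of_ne (Ne.symm hu0)
        have hv' : 0 < v := hv.lt_of_ne (Ne.symm hv0)
        have hc' : u * f (V b) + v * f (V b) = f (V b) := by
          rw [← add_mul, huv, one_mul]
        have hsum : u * (f (V b) - f y) + v * (f (V b) - f z) = 0 := by nlinarith
        have t1 : 0 ≤ u * (f (V b) - f y) := mul_nonneg hu'.le (by linarith)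
        have t2 : 0 ≤ v * (f (V b) - f z) := mul_nonneg hv'.le (by linarith)
        have e1 : u * (f (V b) - f y) = 0 := by linarith
        have e2 : v * (f (V b) - f z) = 0 := by linarith
        constructor
        · rcases mul_eq_zero.mp e1 with h0 | h0
          · exact absurd h0 hu0
          · linarith
        · rcases mul_eq_zero.mp e2 with h0 | h0
          · exact absurd h0 hv0
          · linarith
      have hfa : f (V a) = f (V b) ∧ f (V c) = f (V b) :=
        hseg_eq (V b) (V a) (V c) hseg (hdist b a (Ne.symm hab)) (hdist b c hbc)
          (hKle _ (hVK a)) (hKle _ (hVK c)) rfl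
      have hfne : f ((1:ℝ),(0:ℝ)) ≠ 0 ∨ f ((0:ℝ),(1:ℝ)) ≠ 0 := by
        by_contra hb
        push_neg at hb
        have hexp := aux_expand f (y₀ - V b)
        rw [map_sub, hb.1, hb.2] at hexp
        simp only [mul_zero, add_zero] at hexp
        have hlt := hf y₀ hy₀
        linarith
      have hVaVc : V a ≠ V c := hdist a c hac
      have hginj : Function.Injective (fun t : ℝ => V a + t • (V c - V a)) := by
        intro s t hst
        simp only [add_right_inj] at hst
        have h0 : (s - t) • (V c - V a) = 0 := by
          rw [sub_smul, hst, sub_self]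
        rcases smul_eq_zero.mp h0 with h0 | h0
        · linarith [sub_eq_zero.mp h0]
        · exact absurd (sub_eq_zero.mp h0) (fun hc => hVaVc hc.symm)
      have hexP : ∃ t ∈ Set.Ioo (0:ℝ) 1, (V a + t • (V c - V a)) ∉ Set.range V := by
        by_contra hcon
        push_neg at hcon
        have hfin : ((fun t : ℝ => V a + t • (V c - V a)) ⁻¹' (Set.range V)).Finite :=
          Set.Finite.preimage hginj.injOn (Set.finite_range V)
        exact (Set.Ioo_infinite (by norm_num : (0:ℝ) < 1)) (hfin.subset hcon)
      obtain ⟨t, htI, htP⟩ := hexP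
      set P := V a + t • (V c - V a) with hP
      have hPseg : P ∈ segment ℝ (V a) (V c) := by
        refine ⟨1 - t, t, by linarith [htI.2], htI.1.le, by ring, ?_⟩
        rw [hP]
        module
      have hfP : f P = f (V b) := by
        have hPe : f P = f (V a) + t * (f (V c) - f (V a)) := by
          rw [hP, map_add, map_smul, map_sub, smul_eq_mul]
        rw [hPe, hfa.1, hfa.2]
        ring
      have hPK : P ∈ K := hKconv.segment_subset (hVK a) (hVK c) hPseg
      have hPfr : P ∈ frontier K := by
        rw [hKcl.frontier_eq]
        exact ⟨hPK, fun hPi => absurd (hf P hPi) (by rw [hfP]; exact lt_irrefl _)⟩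
      have hPedge : P ∈ ⋃ i : Fin n, segment ℝ (V i) (V (nxt i)) := by
        rw [h]
        exact hPfr
      obtain ⟨j', hPj⟩ := Set.mem_iUnion.mp hPedge
      have hPnj : P ≠ V j' := fun hc => htP (hc ▸ Set.mem_range_self j')
      have hPnnj : P ≠ V (nxt j') := fun hc => htP (hc ▸ Set.mem_range_self (nxt j'))
      obtain ⟨hfj, hfnj⟩ := hseg_eq P (V j') (V (nxt j')) hPj hPnj hPnnj
        (hKle _ (hVK j')) (hKle _ (hVK (nxt j'))) hfP
      have hpick : ∃ m : Fin n, f (V m) = f (V b) ∧ m ≠ j' ∧ m ≠ nxt j' := by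
        by_cases haj : a ≠ j' ∧ a ≠ nxt j'
        · exact ⟨a, hfa.1, haj.1, haj.2⟩
        by_cases hbj : b ≠ j' ∧ b ≠ nxt j'
        · exact ⟨b, rfl, hbj.1, hbj.2⟩
        by_cases hcj : c ≠ j' ∧ c ≠ nxt j'
        · exact ⟨c, hfa.2, hcj.1, hcj.2⟩
        exfalso
        push_neg at haj hbj hcj
        have ha' : a = j' ∨ a = nxt j' := by
          by_cases h' : a = j'
          exacts [Or.inl h', Or.inr (haj h')]
        have hb' : b = j' ∨ b = nxt j' := by
          by_cases h' : b = j'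
          exacts [Or.inl h', Or.inr (hbj h')]
        have hc' : c = j' ∨ c = nxt j' := by
          by_cases h' : c = j'
          exacts [Or.inl h', Or.inr (hcj h')]
        rcases ha' with rfl | ha' <;> rcases hb' with hb' | hb' <;>
          rcases hc' with hc' | hc' <;> simp_all
      obtain ⟨m, hfm, hmj, hmnj⟩ := hpick
      exact hQ j' m hmj hmnj (aux_line f hfne (f (V b)) _ _ _ hfj hfnj hfm)
    rcases hcol.wbtw_or_wbtw_or_wbtw with hw | hw | hw
    · exact key i j k hij hik hjk hw.mem_segment
    · exact key j k i hjk (Ne.symm hij) (Ne.symm hik) hw.mem_segment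
    · exact key k i j (Ne.symm hik) (Ne.symm hjk) hij hw.mem_segment
end
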